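/- arXiv:1704.08046 — 4 statements merged into one kernel-verified Lean document; each statement's English description precedes it below -/
import Mathlib

section
/- Let d ≥ 2 and 1 ≤ n ≤ d − 1 be integers, let δ ∈ (0,1) be real, let M > 0 be real with (1−δ)M ≥ d, and set m = δM. Then Φ_d(M,m)/Φ_n(M,m) ≥ (√(2π)/e)^{d+n} · (d/n)^{2δM} · ((1−δ)/(1+δ))^{(d−n)/2}. -/
open MeasureTheory

noncomputable section

/-- `Phi d m n` is Φ_d(m,n) = (Γ((m−n)/d + 1)/Γ((m+n)/d + 1))^d. -/
def Phi (d : ℕ) (m n : ℝ) : ℝ :=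
  (Real.Gamma ((m - n) / d + 1) / Real.Gamma ((m + n) / d + 1)) ^ d

/-- The open cube κ̂ = (−1,1)^d. -/
def cube (d : ℕ) : Set (Fin d → ℝ) := Set.univ.pi fun _ => Set.Ioo (-1 : ℝ) 1

/-- The closed cube [−1,1]^d. -/
def closedCube (d : ℕ) : Set (Fin d → ℝ) := Set.univ.pi fun _ => Set.Icc (-1 : ℝ) 1

/-- Squared L²-norm over the cube. -/
def l2sq {d : ℕ} (f : (Fin d → ℝ) → ℝ) : ℝ := ∫ x in cube d, (f x) ^ 2

/-- Partial derivative in the k-th coordinate direction. -/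
def pd {d : ℕ} (k : Fin d) (f : (Fin d → ℝ) → ℝ) : (Fin d → ℝ) → ℝ :=
  fun x => fderiv ℝ f x (Pi.single k 1)

/-- Iterated partial derivative D^α. -/
def mderiv {d : ℕ} (α : Fin d → ℕ) (f : (Fin d → ℝ) → ℝ) : (Fin d → ℝ) → ℝ :=
  (List.finRange d).foldr (fun k g => (pd k)^[α k] g) f

/-- Squared Sobolev seminorm |u|²_{H^s}. -/
def Hsem (d s : ℕ) (u : (Fin d → ℝ) → ℝ) : ℝ :=
  ∑ α ∈ Finset.Nat.antidiagonalTuple d s, l2sq (mderiv α u)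

/-- Squared weighted seminorm |u|²_{V^s}. -/
def Vsem (d s : ℕ) (u : (Fin d → ℝ) → ℝ) : ℝ :=
  ∑ α ∈ Finset.Nat.antidiagonalTuple d s,
    l2sq fun x => (∏ k, (1 - x k ^ 2) ^ ((α k : ℝ) / 2)) * mderiv α u x

/-- Squared L²-norm of the gradient. -/
def gradsq {d : ℕ} (f : (Fin d → ℝ) → ℝ) : ℝ := ∑ k : Fin d, l2sq (pd k f)

/-- u is C^∞ on an open neighbourhood of [−1,1]^d. -/
def SmoothOnNbhd {d : ℕ} (u : (Fin d → ℝ) → ℝ) : Prop :=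
  ∃ U : Set (Fin d → ℝ), IsOpen U ∧ closedCube d ⊆ U ∧ ContDiffOn ℝ (⊤ : ℕ∞) u U

/-- Membership in Q_p : polynomial of degree ≤ p in each variable. -/
def IsQp (d p : ℕ) (f : (Fin d → ℝ) → ℝ) : Prop :=
  ∃ q : MvPolynomial (Fin d) ℝ, (∀ k, q.degreeOf k ≤ p) ∧ ∀ x, MvPolynomial.eval x q = f x

/-- Membership in P_p : polynomial of total degree ≤ p. -/
def IsPp (d p : ℕ) (f : (Fin d → ℝ) → ℝ) : Prop :=
  ∃ q : MvPolynomial (Fin d) ℝ, q.totalDegree ≤ p ∧ ∀ x, MvPolynomial.eval x q = f x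

/-- Superlinear degree of a monomial: sum of the exponents that are at least 2. -/
def superlinearDeg {d : ℕ} (m : Fin d →₀ ℕ) : ℕ := ∑ k, if 2 ≤ m k then m k else 0

/-- Membership in the serendipity space S_p (superlinear-degree definition). -/
def IsSp (d p : ℕ) (f : (Fin d → ℝ) → ℝ) : Prop :=
  ∃ q : MvPolynomial (Fin d) ℝ, (∀ m ∈ q.support, superlinearDeg m ≤ p) ∧
    ∀ x, MvPolynomial.eval x q = f x

/-- Membership in the 2D serendipity space S_p = P_p + span{x₁^p x₂, x₁ x₂^p}. -/
def IsSp2 (p : ℕ) (f : (Fin 2 → ℝ) → ℝ) : Prop :=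
  ∃ (q : MvPolynomial (Fin 2) ℝ) (a b : ℝ), q.totalDegree ≤ p ∧
    ∀ x, f x = MvPolynomial.eval x q + a * x 0 ^ p * x 1 + b * x 0 * x 1 ^ p

/-- `Pu` is the L²(cube)-orthogonal projection of `u` onto the subspace `{f | P f}`. -/
def IsL2Proj {d : ℕ} (P : ((Fin d → ℝ) → ℝ) → Prop) (u Pu : (Fin d → ℝ) → ℝ) : Prop :=
  P Pu ∧ ∀ v, P v → ∫ x in cube d, (u x - Pu x) * v x = 0

/-- q agrees with u at all vertices of the cube. -/
def AgreesAtVertices {d : ℕ} (u q : (Fin d → ℝ) → ℝ) : Prop :=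
  ∀ x : Fin d → ℝ, (∀ k, x k = 1 ∨ x k = -1) → q x = u x

/-- Legendre polynomial via Rodrigues' formula. -/
def legendre (n : ℕ) (x : ℝ) : ℝ :=
  (1 / ((2 : ℝ) ^ n * n.factorial)) * iteratedDeriv n (fun t : ℝ => (t ^ 2 - 1) ^ n) x

/-- Legendre coefficient a_i of u. -/
def legCoeff {d : ℕ} (u : (Fin d → ℝ) → ℝ) (i : Fin d → ℕ) : ℝ :=
  ∫ x in cube d, u x * ∏ k, ((2 * (i k : ℝ) + 1) / 2) * legendre (i k) (x k)

namespace SAux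
open Filter


lemma log_ge_aux {u : ℝ} (hu : 1 ≤ u) : 2*(u-1)/(u+1) ≤ Real.log u := by
  have h0 : (0:ℝ) < u := by linarith
  set F : ℝ → ℝ := fun v => Real.log v + 4 * (v+1)⁻¹ - 2 with hF
  have hderiv : ∀ v, 1 ≤ v → HasDerivAt F (1/v - 4/((v+1)^2)) v := by
    intro v hv
    have h1 : HasDerivAt (fun v : ℝ => v + 1) 1 v := (hasDerivAt_id v).add_const 1
    have h2 : HasDerivAt (fun v : ℝ => (v+1)⁻¹) (-1/(v+1)^2) v := h1.inv (by linarith)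
    have h3 : HasDerivAt Real.log (1/v) v := by
      simpa using Real.hasDerivAt_log (by linarith : v ≠ 0)
    have := (h3.add (h2.const_mul 4)).sub_const 2
    exact this.congr_deriv (by ring)
  have hmono : MonotoneOn F (Set.Ici 1) := by
    apply monotoneOn_of_deriv_nonneg (convex_Ici 1)
    · intro v hv
      exact (hderiv v hv).continuousAt.continuousWithinAt
    · intro v hv
      rw [interior_Ici] at hv
      exact (hderiv v (le_of_lt hv)).differentiableAt.differentiableWithinAt
    · intro v hv
      rw [interior_Ici, Set.mem_Ioi] at hv
      have hv0 : (0:ℝ) < v := by linarith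
      rw [(hderiv v hv.le).deriv]
      rw [sub_nonneg, div_le_div_iff₀ (by positivity) (by positivity)]
      nlinarith [sq_nonneg (v-1)]
  have hF1 : F 1 = 0 := by norm_num [hF]
  have := hmono (Set.mem_Ici.mpr le_rfl) (Set.mem_Ici.mpr hu) hu
  rw [hF1] at this
  have heq : 2*(u-1)/(u+1) = 2 - 4*(u+1)⁻¹ := by
    rw [eq_sub_iff_add_eq]
    field_simp
    ring
  simp only [hF] at this
  linarith

lemma log_le_aux {u : ℝ} (hu : 1 ≤ u) : Real.log u ≤ u/2 - 1/(2*u) := by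
  have h0 : (0:ℝ) < u := by linarith
  set F : ℝ → ℝ := fun v => v/2 - (2*v)⁻¹ - Real.log v with hF
  have hderiv : ∀ v, 1 ≤ v → HasDerivAt F (1/2 + 2/(2*v)^2 - 1/v) v := by
    intro v hv
    have h1 : HasDerivAt (fun v : ℝ => 2*v) 2 v := by
      simpa using (hasDerivAt_id v).const_mul 2
    have h2 : HasDerivAt (fun v : ℝ => (2*v)⁻¹) (-2/(2*v)^2) v := h1.inv (by positivity)
    have h3 : HasDerivAt Real.log (1/v) v := by
      simpa using Real.hasDerivAt_log (by linarith : v ≠ 0)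
    have h4 : HasDerivAt (fun v : ℝ => v/2) (1/2) v := by
      simpa using (hasDerivAt_id v).div_const 2
    have := (h4.sub h2).sub h3
    exact this.congr_deriv (by ring)
  have hmono : MonotoneOn F (Set.Ici 1) := by
    apply monotoneOn_of_deriv_nonneg (convex_Ici 1)
    · intro v hv
      exact (hderiv v hv).continuousAt.continuousWithinAt
    · intro v hv
      rw [interior_Ici] at hv
      exact (hderiv v hv.le).differentiableAt.differentiableWithinAt
    · intro v hv
      rw [interior_Ici, Set.mem_Ioi] at hv
      have hv0 : (0:ℝ) < v := by linarith
      rw [(hderiv v hv.le).deriv]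
      have : 1/v ≤ 1/2 + 2/(2*v)^2 := by
        rw [div_add_div _ _ (by norm_num) (by positivity), div_le_div_iff₀ (by positivity) (by positivity)]
        nlinarith [sq_nonneg (v-1)]
      linarith
  have hF1 : F 1 = 0 := by norm_num [hF]
  have := hmono (Set.mem_Ici.mpr le_rfl) (Set.mem_Ici.mpr hu) hu
  rw [hF1] at this
  simp only [hF] at this
  have : Real.log u ≤ u/2 - (2*u)⁻¹ := by linarith
  rw [← one_div] at this
  linarith




noncomputable def gS (x : ℝ) : ℝ := (x + 1/2) * (Real.log (x+1) - Real.log x) - 1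

noncomputable def fS (x : ℝ) : ℝ := Real.log (Real.Gamma (x+1)) - (x + 1/2) * Real.log x + x

lemma gS_nonneg {x : ℝ} (hx : 1 ≤ x) : 0 ≤ gS x := by
  have hx0 : (0:ℝ) < x := by linarith
  have hu : 1 ≤ (x+1)/x := by rw [le_div_iff₀ hx0]; linarith
  have h := log_ge_aux hu
  have hlog : Real.log ((x+1)/x) = Real.log (x+1) - Real.log x :=
    Real.log_div (by linarith) (by linarith)
  rw [hlog] at h
  have heq : 2*((x+1)/x-1)/((x+1)/x+1) = 2/(2*x+1) := by
    rw [div_eq_div_iff (by positivity) (by positivity)]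
    field_simp
    ring
  rw [heq] at h
  have : (x + 1/2) * (2/(2*x+1)) = 1 := by field_simp
  rw [gS, sub_nonneg]
  calc (1:ℝ) = (x + 1/2) * (2/(2*x+1)) := this.symm
    _ ≤ (x + 1/2) * (Real.log (x+1) - Real.log x) := by
        apply mul_le_mul_of_nonneg_left h (by linarith)

lemma gS_antitone : AntitoneOn gS (Set.Ici 1) := by
  have hderiv : ∀ v : ℝ, 1 ≤ v →
      HasDerivAt gS ((Real.log (v+1) - Real.log v) + (v + 1/2) * (1/(v+1) - 1/v)) v := by
    intro v hv
    have h1 : HasDerivAt (fun v : ℝ => Real.log (v+1)) (1/(v+1)) v := by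
      have := (Real.hasDerivAt_log (by linarith : v+1 ≠ 0)).comp v
        ((hasDerivAt_id v).add_const 1)
      simpa [one_div, Function.comp_def] using this
    have h2 : HasDerivAt Real.log (1/v) v := by
      simpa using Real.hasDerivAt_log (by linarith : v ≠ 0)
    have h3 : HasDerivAt (fun v : ℝ => v + 1/2) 1 v := (hasDerivAt_id v).add_const _
    have := ((h3.mul (h1.sub h2))).sub_const 1
    exact this.congr_deriv (by simp only [Pi.sub_apply]; ring)
  apply antitoneOn_of_deriv_nonpos (convex_Ici 1)
  · intro v hv
    exact (hderiv v hv).continuousAt.continuousWithinAt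
  · intro v hv
    rw [interior_Ici, Set.mem_Ioi] at hv
    exact (hderiv v hv.le).differentiableAt.differentiableWithinAt
  · intro v hv
    rw [interior_Ici, Set.mem_Ioi] at hv
    have hv0 : (0:ℝ) < v := by linarith
    rw [(hderiv v hv.le).deriv]
    have hu : 1 ≤ (v+1)/v := by rw [le_div_iff₀ hv0]; linarith
    have h := log_le_aux hu
    have hlog : Real.log ((v+1)/v) = Real.log (v+1) - Real.log v :=
      Real.log_div (by linarith) (by linarith)
    rw [hlog] at h
    have heq : ((v+1)/v)/2 - 1/(2*((v+1)/v)) + (v + 1/2) * (1/(v+1) - 1/v) = 0 := by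
      field_simp
      ring
    nlinarith [h, heq]

lemma fS_step {x : ℝ} (hx : 0 < x) : fS x = gS x + fS (x+1) := by
  have hG : Real.Gamma (x+1+1) = (x+1) * Real.Gamma (x+1) :=
    Real.Gamma_add_one (by linarith)
  have hGpos : 0 < Real.Gamma (x+1) := Real.Gamma_pos_of_pos (by linarith)
  rw [fS, fS, gS, hG, Real.log_mul (by linarith) (ne_of_gt hGpos)]
  ring

lemma fS_telescope {x : ℝ} (hx : 1 ≤ x) (N : ℕ) :
    fS x = (∑ k ∈ Finset.range N, gS (x+k)) + fS (x+N) := by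
  induction N with
  | zero => simp
  | succ N ih =>
    rw [ih, Finset.sum_range_succ]
    have : fS (x + N) = gS (x + N) + fS (x + N + 1) := fS_step (by positivity)
    rw [this]
    push_cast
    ring_nf



lemma logGamma_ub {n : ℕ} (hn : 1 ≤ n) {s : ℝ} (h1 : (n:ℝ) ≤ s) (h2 : s ≤ n+1) :
    Real.log (Real.Gamma (s+1)) ≤ Real.log (n.factorial : ℝ) + (s - n) * Real.log (n+1) := by
  have hc := Real.convexOn_log_Gamma
  set u : ℝ := s - n with hu
  have hu0 : 0 ≤ u := by simp [hu]; linarith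
  have hu1 : u ≤ 1 := by simp [hu]; linarith
  have hn0 : (0:ℝ) < n := by exact_mod_cast hn
  have key := hc.2 (Set.mem_Ioi.mpr (by linarith : (0:ℝ) < (n:ℝ)+1))
    (Set.mem_Ioi.mpr (by linarith : (0:ℝ) < (n:ℝ)+2))
    (by linarith : (0:ℝ) ≤ 1 - u) hu0 (by ring)
  have harg : (1-u) • ((n:ℝ)+1) + u • ((n:ℝ)+2) = s + 1 := by
    simp only [smul_eq_mul]; ring
  rw [harg] at key
  have hΓ1 : Real.Gamma ((n:ℝ)+1) = (n.factorial : ℝ) := Real.Gamma_nat_eq_factorial n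
  have hΓ2 : Real.Gamma ((n:ℝ)+2) = ((n+1).factorial : ℝ) := by
    have := Real.Gamma_nat_eq_factorial (n+1)
    push_cast at this ⊢
    convert this using 2
    ring
  simp only [Function.comp] at key
  rw [hΓ1, hΓ2] at key
  have hfac : ((n+1).factorial : ℝ) = ((n:ℝ)+1) * (n.factorial : ℝ) := by
    rw [Nat.factorial_succ]; push_cast; ring
  rw [hfac, Real.log_mul (by positivity) (by positivity)] at key
  calc Real.log (Real.Gamma (s+1)) ≤ (1-u) * Real.log (n.factorial : ℝ) + u * (Real.log ((n:ℝ)+1) + Real.log (n.factorial : ℝ)) := key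
    _ = Real.log (n.factorial : ℝ) + u * Real.log ((n:ℝ)+1) := by ring

lemma logGamma_lb {n : ℕ} (hn : 1 ≤ n) {s : ℝ} (h1 : (n:ℝ) ≤ s) (h2 : s ≤ n+1) :
    Real.log (n.factorial : ℝ) + (s - n) * Real.log n ≤ Real.log (Real.Gamma (s+1)) := by
  have hc := Real.convexOn_log_Gamma
  set u : ℝ := s - n with hu
  have hu0 : 0 ≤ u := by simp [hu]; linarith
  have hn0 : (0:ℝ) < n := by exact_mod_cast hn
  have hpos : (0:ℝ) < 1 + u := by linarith
  have key := hc.2 (Set.mem_Ioi.mpr hn0)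
    (Set.mem_Ioi.mpr (by linarith : (0:ℝ) < s+1))
    (by positivity : (0:ℝ) ≤ u/(1+u)) (by positivity : (0:ℝ) ≤ 1/(1+u))
    (by field_simp; ring)
  have harg : (u/(1+u)) • (n:ℝ) + (1/(1+u)) • (s+1) = (n:ℝ)+1 := by
    simp only [smul_eq_mul]
    field_simp
    simp only [hu]
    ring
  rw [harg] at key
  simp only [Function.comp] at key
  have hΓ1 : Real.Gamma ((n:ℝ)+1) = (n.factorial : ℝ) := Real.Gamma_nat_eq_factorial n
  have hΓn : Real.log (Real.Gamma (n:ℝ)) = Real.log (n.factorial : ℝ) - Real.log n := by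
    have hG : Real.Gamma ((n:ℝ)+1) = n * Real.Gamma (n:ℝ) :=
      Real.Gamma_add_one (ne_of_gt hn0)
    have hGpos : 0 < Real.Gamma (n:ℝ) := Real.Gamma_pos_of_pos hn0
    rw [hΓ1] at hG
    rw [eq_sub_iff_add_eq, ← Real.log_mul (ne_of_gt hGpos) (ne_of_gt hn0), hG]
    ring_nf
  rw [hΓ1, hΓn] at key
  -- key : log n! ≤ (u/(1+u)) * (log n! - log n) + (1/(1+u)) * log Γ(s+1)
  simp only [smul_eq_mul] at key
  have key2 := mul_le_mul_of_nonneg_left key (le_of_lt hpos)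
  have hne : (1+u) ≠ 0 := ne_of_gt hpos
  rw [mul_add, ← mul_assoc, ← mul_assoc] at key2
  have e1 : (1+u) * ((u/(1+u)) * (Real.log (n.factorial : ℝ) - Real.log n)) = u * (Real.log (n.factorial : ℝ) - Real.log n) := by
    field_simp
  have e2 : (1+u) * ((1/(1+u)) * Real.log (Real.Gamma (s+1))) = Real.log (Real.Gamma (s+1)) := by
    field_simp
  rw [mul_assoc, mul_assoc, e1, e2] at key2
  nlinarith [key2]





lemma log_factorial (n : ℕ) (hn : 1 ≤ n) :
    Real.log (n.factorial : ℝ) = Real.log (Stirling.stirlingSeq n)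
      + (Real.log 2 + Real.log n) / 2 + n * (Real.log n - 1) := by
  have hn0 : (0:ℝ) < n := by exact_mod_cast hn
  have h := Stirling.log_stirlingSeq_formula n
  have h2 : Real.log (2 * (n:ℝ)) = Real.log 2 + Real.log n :=
    Real.log_mul (by norm_num) (ne_of_gt hn0)
  have h3 : Real.log ((n:ℝ) / Real.exp 1) = Real.log n - 1 := by
    rw [Real.log_div (ne_of_gt hn0) (ne_of_gt (Real.exp_pos 1)), Real.log_exp]
  rw [h2, h3] at h
  linarith [h]

lemma floor_facts {s : ℝ} (hs : 1 ≤ s) :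
    1 ≤ ⌊s⌋₊ ∧ (⌊s⌋₊:ℝ) ≤ s ∧ s < ⌊s⌋₊ + 1 := by
  refine ⟨?_, Nat.floor_le (by linarith), Nat.lt_floor_add_one s⟩
  exact Nat.le_floor (by exact_mod_cast hs)

lemma fS_bound_lb {s : ℝ} (hs : 1 ≤ s) :
    Real.log (Stirling.stirlingSeq ⌊s⌋₊) + Real.log 2 / 2 - 3/(2*(⌊s⌋₊:ℝ)) ≤ fS s := by
  obtain ⟨hn, hns, hsn⟩ := floor_facts hs
  set n := ⌊s⌋₊
  have hn0 : (0:ℝ) < n := by exact_mod_cast hn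
  have hs0 : (0:ℝ) < s := by linarith
  set u : ℝ := s - n with hu
  have hu0 : 0 ≤ u := by simp [hu]; linarith
  have hu1 : u < 1 := by simp [hu]; linarith
  have hlb := logGamma_lb hn hns (le_of_lt hsn)
  rw [log_factorial n hn] at hlb
  have hQP : Real.log s - Real.log n ≤ u/n := by
    have h1 : Real.log (s/n) ≤ s/n - 1 := Real.log_le_sub_one_of_pos (by positivity)
    rw [Real.log_div (ne_of_gt hs0) (ne_of_gt hn0)] at h1
    have : s/n - 1 = u/n := by field_simp [hu]; linarith
    linarith [h1, this.symm.le]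
  have hsu : (s + 1/2) * (Real.log s - Real.log n) ≤ u + 3/(2*n) := by
    have h1 : (s + 1/2) * (Real.log s - Real.log n) ≤ (s + 1/2) * (u/n) :=
      mul_le_mul_of_nonneg_left hQP (by linarith)
    have h2 : (s + 1/2) * (u/n) = u + (u*(u+1/2))/n := by
      field_simp [hu]
      ring
    have h3 : (u*(u+1/2))/n ≤ 3/(2*n) := by
      rw [div_le_div_iff₀ hn0 (by positivity)]
      nlinarith [mul_nonneg (by nlinarith : (0:ℝ) ≤ 3/2 - u*(u+1/2)) hn0.le]
    nlinarith
  rw [fS]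
  have expand : Real.log (Stirling.stirlingSeq n) + (Real.log 2 + Real.log n) / 2
      + n * (Real.log n - 1) + (s - n) * Real.log n
      = Real.log (Stirling.stirlingSeq n) + Real.log 2 / 2 + (s + 1/2) * Real.log n - n := by
    ring
  nlinarith [hlb, hsu]

lemma fS_bound_ub {s : ℝ} (hs : 1 ≤ s) :
    fS s ≤ Real.log (Stirling.stirlingSeq ⌊s⌋₊) + Real.log 2 / 2 + 1/(⌊s⌋₊:ℝ) := by
  obtain ⟨hn, hns, hsn⟩ := floor_facts hs
  set n := ⌊s⌋₊
  have hn0 : (0:ℝ) < n := by exact_mod_cast hn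
  have hs0 : (0:ℝ) < s := by linarith
  set u : ℝ := s - n with hu
  have hu0 : 0 ≤ u := by simp [hu]; linarith
  have hu1 : u < 1 := by simp [hu]; linarith
  have hub := logGamma_ub hn hns (le_of_lt hsn)
  rw [log_factorial n hn] at hub
  have hlog1 : Real.log ((n:ℝ)+1) - Real.log n ≤ 1/n := by
    have h1 : Real.log (((n:ℝ)+1)/n) ≤ ((n:ℝ)+1)/n - 1 := Real.log_le_sub_one_of_pos (by positivity)
    rw [Real.log_div (by positivity) (ne_of_gt hn0)] at h1
    have : ((n:ℝ)+1)/n - 1 = 1/n := by field_simp; ring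
    linarith [h1, this.symm.le]
  have hQP : u/s ≤ Real.log s - Real.log n := by
    have h1 : Real.log ((n:ℝ)/s) ≤ (n:ℝ)/s - 1 := Real.log_le_sub_one_of_pos (by positivity)
    rw [Real.log_div (ne_of_gt hn0) (ne_of_gt hs0)] at h1
    have : (n:ℝ)/s - 1 = -(u/s) := by field_simp [hu]; linarith
    linarith [h1, this.symm.le]
  have hsu : u ≤ (s + 1/2) * (Real.log s - Real.log n) := by
    have h1 : (s + 1/2) * (u/s) ≤ (s + 1/2) * (Real.log s - Real.log n) :=
      mul_le_mul_of_nonneg_left hQP (by linarith)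
    have h2 : u ≤ (s + 1/2) * (u/s) := by
      rw [← sub_nonneg]
      have : (s + 1/2) * (u/s) - u = u/(2*s) := by field_simp; ring
      rw [this]
      positivity
    linarith
  have hufrac : u * (Real.log ((n:ℝ)+1) - Real.log n) ≤ 1/n := by
    calc u * (Real.log ((n:ℝ)+1) - Real.log n) ≤ 1 * (1/n) := by
          apply mul_le_mul hu1.le hlog1 ?_ (by norm_num)
          have h1 : Real.log (((n:ℝ))/((n:ℝ)+1)) ≤ 0 := by
            apply Real.log_nonpos (by positivity)
            rw [div_le_one (by positivity)]; linarith
          have := Real.log_le_sub_one_of_pos (x := ((n:ℝ))/((n:ℝ)+1)) (by positivity)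
          nlinarith [Real.log_div (ne_of_gt hn0) (by positivity : ((n:ℝ)+1) ≠ 0)]
      _ = 1/n := by ring
  rw [fS]
  nlinarith [hub, hsu, hufrac]






lemma tendsto_log_stirling (k : ℕ) :
    Tendsto (fun N : ℕ => Real.log (Stirling.stirlingSeq (k + N))) atTop
      (nhds (Real.log (Real.sqrt Real.pi))) := by
  have h1 : Tendsto (fun N : ℕ => k + N) atTop atTop := by
    apply tendsto_atTop_atTop_of_monotone (fun a b hab => by omega)
    intro b; exact ⟨b, by omega⟩
  have h2 : Tendsto (fun N : ℕ => Stirling.stirlingSeq (k + N)) atTop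
      (nhds (Real.sqrt Real.pi)) := Stirling.tendsto_stirlingSeq_sqrt_pi.comp h1
  have hπ : Real.sqrt Real.pi ≠ 0 := ne_of_gt (Real.sqrt_pos.mpr Real.pi_pos)
  exact (Real.continuousAt_log hπ).tendsto.comp h2

lemma tendsto_inv_shift (k : ℕ) (c : ℝ) :
    Tendsto (fun N : ℕ => c/(((k + N : ℕ)):ℝ)) atTop (nhds 0) := by
  apply Tendsto.div_atTop (tendsto_const_nhds (x := c))
  apply tendsto_natCast_atTop_atTop.comp
  apply tendsto_atTop_atTop_of_monotone (fun a b hab => by omega)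
  intro b; exact ⟨b, by omega⟩

lemma tendsto_inv_shift2 (k : ℕ) (c : ℝ) :
    Tendsto (fun N : ℕ => c/(2*((k + N : ℕ):ℝ))) atTop (nhds 0) := by
  have := tendsto_inv_shift k (c/2)
  simpa [div_div] using this

lemma floor_shift {x : ℝ} (hx : 1 ≤ x) (N : ℕ) : ⌊x + N⌋₊ = ⌊x⌋₊ + N :=
  Nat.floor_add_natCast (by linarith) N

lemma fS_ge {x : ℝ} (hx : 1 ≤ x) : Real.log (Real.sqrt (2*Real.pi)) ≤ fS x := by
  set k := ⌊x⌋₊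
  have hlim : Tendsto (fun N : ℕ => Real.log (Stirling.stirlingSeq (k + N))
      + Real.log 2 / 2 - 3/(2*((k + N : ℕ):ℝ))) atTop
      (nhds (Real.log (Real.sqrt Real.pi) + Real.log 2 / 2 - 0)) := by
    exact Tendsto.sub (Tendsto.add (tendsto_log_stirling k) tendsto_const_nhds)
      (tendsto_inv_shift2 k 3)
  have hval : Real.log (Real.sqrt Real.pi) + Real.log 2 / 2 - 0
      = Real.log (Real.sqrt (2*Real.pi)) := by
    rw [sub_zero, Real.log_sqrt Real.pi_pos.le, Real.log_sqrt (by positivity),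
      Real.log_mul (by norm_num) (ne_of_gt Real.pi_pos)]
    ring
  rw [hval] at hlim
  apply le_of_tendsto hlim
  filter_upwards with N
  have hxN : 1 ≤ x + N := by
    have : (0:ℝ) ≤ N := Nat.cast_nonneg N
    linarith
  have h1 := fS_bound_lb hxN
  rw [floor_shift hx N] at h1
  have h2 : fS (x + N) ≤ fS x := by
    rw [fS_telescope hx N]
    have : 0 ≤ ∑ k ∈ Finset.range N, gS (x + k) := by
      apply Finset.sum_nonneg
      intro i _
      exact gS_nonneg (by have : (0:ℝ) ≤ i := Nat.cast_nonneg i; linarith)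
    linarith
  linarith

lemma fS_one : fS 1 = 1 := by
  rw [fS]
  norm_num [Real.Gamma_two]

lemma fS_le_one {x : ℝ} (hx : 1 ≤ x) : fS x ≤ 1 := by
  set k := ⌊x⌋₊
  have hk1 : 1 ≤ k := Nat.le_floor (by exact_mod_cast hx)
  have hlim : Tendsto (fun N : ℕ =>
      (Real.log (Stirling.stirlingSeq (k + N)) + Real.log 2 / 2 + 1/((k + N : ℕ):ℝ))
      - (Real.log (Stirling.stirlingSeq (1 + N)) + Real.log 2 / 2 - 3/(2*((1 + N : ℕ):ℝ))))
      atTop (nhds ((Real.log (Real.sqrt Real.pi) + Real.log 2 / 2 + 0)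
        - (Real.log (Real.sqrt Real.pi) + Real.log 2 / 2 - 0))) := by
    apply Tendsto.sub
    · exact Tendsto.add (Tendsto.add (tendsto_log_stirling k) tendsto_const_nhds)
        (tendsto_inv_shift k 1)
    · exact Tendsto.sub (Tendsto.add (tendsto_log_stirling 1) tendsto_const_nhds)
        (tendsto_inv_shift2 1 3)
  have hzero : (Real.log (Real.sqrt Real.pi) + Real.log 2 / 2 + 0)
        - (Real.log (Real.sqrt Real.pi) + Real.log 2 / 2 - 0) = 0 := by ring
  rw [hzero] at hlim
  have hbound : ∀ N : ℕ, fS x - fS 1 ≤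
      (Real.log (Stirling.stirlingSeq (k + N)) + Real.log 2 / 2 + 1/((k + N : ℕ):ℝ))
      - (Real.log (Stirling.stirlingSeq (1 + N)) + Real.log 2 / 2 - 3/(2*((1 + N : ℕ):ℝ))) := by
    intro N
    have hN0 : (0:ℝ) ≤ N := Nat.cast_nonneg N
    have hxN : 1 ≤ x + N := by linarith
    have h1N : 1 ≤ (1:ℝ) + N := by linarith
    have hub := fS_bound_ub hxN
    rw [floor_shift hx N] at hub
    have hlb := fS_bound_lb h1N
    have hfloor1 : ⌊(1:ℝ) + N⌋₊ = 1 + N := by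
      rw [floor_shift le_rfl N, Nat.floor_one]
    rw [hfloor1] at hlb
    have htelx := fS_telescope hx N
    have htel1 := fS_telescope (le_refl (1:ℝ)) N
    have hsum : ∑ i ∈ Finset.range N, gS (x + i) ≤ ∑ i ∈ Finset.range N, gS (1 + i) := by
      apply Finset.sum_le_sum
      intro i _
      have hi0 : (0:ℝ) ≤ i := Nat.cast_nonneg i
      exact gS_antitone (Set.mem_Ici.mpr (by linarith)) (Set.mem_Ici.mpr (by linarith))
        (by linarith)
    have hcast1 : ((1:ℝ) + (N:ℝ)) = ((1 + N : ℕ):ℝ) := by push_cast; ring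
    rw [hcast1] at htel1 hlb
    linarith
  have := ge_of_tendsto hlim (Eventually.of_forall (fun N => hbound N))
  have hf1 : fS 1 = 1 := fS_one
  linarith

lemma log_Gamma_lb {x : ℝ} (hx : 1 ≤ x) :
    Real.log (Real.sqrt (2*Real.pi)) + (x + 1/2) * Real.log x - x ≤ Real.log (Real.Gamma (x+1)) := by
  have := fS_ge hx
  rw [fS] at this
  linarith

lemma log_Gamma_ub {x : ℝ} (hx : 1 ≤ x) :
    Real.log (Real.Gamma (x+1)) ≤ 1 + (x + 1/2) * Real.log x - x := by
  have := fS_le_one hx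
  rw [fS] at this
  linarith

end SAux

theorem stmt_3 (d n : ℕ) (hd : 2 ≤ d) (hn1 : 1 ≤ n) (hn2 : n ≤ d - 1)
    (δ M : ℝ) (hδ0 : 0 < δ) (hδ1 : δ < 1) (hM : 0 < M) (hdM : (d : ℝ) ≤ (1 - δ) * M) :
    (Real.sqrt (2 * Real.pi) / Real.exp 1) ^ (d + n) * ((d : ℝ) / n) ^ (2 * δ * M) *
        ((1 - δ) / (1 + δ)) ^ (((d : ℝ) - n) / 2)
      ≤ Phi d M (δ * M) / Phi n M (δ * M) := by
  have hdR : (0:ℝ) < d := by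
    have : 0 < d := by omega
    exact_mod_cast this
  have hnR : (0:ℝ) < n := by exact_mod_cast hn1
  have hnd : (n:ℝ) ≤ d := by
    have : n ≤ d := by omega
    exact_mod_cast this
  have hm0 : 0 < δ * M := mul_pos hδ0 hM
  have hMm : (d:ℝ) ≤ M - δ * M := by nlinarith
  have hMm0 : (0:ℝ) < M - δ * M := lt_of_lt_of_le hdR hMm
  have hMp0 : (0:ℝ) < M + δ * M := by linarith
  set a : ℝ := (M - δ * M)/(d:ℝ) with ha_def
  set b : ℝ := (M + δ * M)/(d:ℝ) with hb_def
  set c : ℝ := (M - δ * M)/(n:ℝ) with hc_def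
  set e : ℝ := (M + δ * M)/(n:ℝ) with he_def
  have ha1 : 1 ≤ a := (le_div_iff₀ hdR).mpr (by linarith)
  have hb1 : 1 ≤ b := (le_div_iff₀ hdR).mpr (by linarith)
  have hc1 : 1 ≤ c := (le_div_iff₀ hnR).mpr (by linarith)
  have he1 : 1 ≤ e := (le_div_iff₀ hnR).mpr (by linarith)
  have hGa : 0 < Real.Gamma (a+1) := Real.Gamma_pos_of_pos (by linarith)
  have hGb : 0 < Real.Gamma (b+1) := Real.Gamma_pos_of_pos (by linarith)
  have hGc : 0 < Real.Gamma (c+1) := Real.Gamma_pos_of_pos (by linarith)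
  have hGe : 0 < Real.Gamma (e+1) := Real.Gamma_pos_of_pos (by linarith)
  have hPhid : Phi d M (δ * M) = (Real.Gamma (a + 1) / Real.Gamma (b + 1)) ^ d := rfl
  have hPhin : Phi n M (δ * M) = (Real.Gamma (c + 1) / Real.Gamma (e + 1)) ^ n := rfl
  have hPhidpos : 0 < Phi d M (δ * M) := by rw [hPhid]; positivity
  have hPhinpos : 0 < Phi n M (δ * M) := by rw [hPhin]; positivity
  have hRatio : 0 < Phi d M (δ * M) / Phi n M (δ * M) := div_pos hPhidpos hPhinpos
  have hsqrtpos : 0 < Real.sqrt (2 * Real.pi) := Real.sqrt_pos.mpr (by positivity)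
  have hbase1 : 0 < Real.sqrt (2 * Real.pi) / Real.exp 1 := div_pos hsqrtpos (Real.exp_pos 1)
  have hbase2 : 0 < (d:ℝ)/n := div_pos hdR hnR
  have hbase3 : 0 < (1 - δ)/(1 + δ) := div_pos (by linarith) (by linarith)
  have hLHS : 0 < (Real.sqrt (2 * Real.pi) / Real.exp 1) ^ (d + n) * ((d : ℝ) / n) ^ (2 * δ * M) *
        ((1 - δ) / (1 + δ)) ^ (((d : ℝ) - n) / 2) :=
    mul_pos (mul_pos (pow_pos hbase1 _) (Real.rpow_pos_of_pos hbase2 _))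
      (Real.rpow_pos_of_pos hbase3 _)
  rw [← Real.log_le_log_iff hLHS hRatio]
  have hlogdiv : Real.log (Phi d M (δ * M) / Phi n M (δ * M))
      = (d:ℝ) * (Real.log (Real.Gamma (a+1)) - Real.log (Real.Gamma (b+1)))
        + (n:ℝ) * (Real.log (Real.Gamma (e+1)) - Real.log (Real.Gamma (c+1))) := by
    rw [Real.log_div (ne_of_gt hPhidpos) (ne_of_gt hPhinpos), hPhid, hPhin,
      Real.log_pow, Real.log_pow, Real.log_div (ne_of_gt hGa) (ne_of_gt hGb),
      Real.log_div (ne_of_gt hGc) (ne_of_gt hGe)]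
    ring
  rw [hlogdiv]
  have h1 := SAux.log_Gamma_lb ha1
  have h2 := SAux.log_Gamma_ub hb1
  have h3 := SAux.log_Gamma_lb he1
  have h4 := SAux.log_Gamma_ub hc1
  have step : (d:ℝ) * ((Real.log (Real.sqrt (2*Real.pi)) + (a+1/2)*Real.log a - a) - (1 + (b+1/2)*Real.log b - b))
      + (n:ℝ) * ((Real.log (Real.sqrt (2*Real.pi)) + (e+1/2)*Real.log e - e) - (1 + (c+1/2)*Real.log c - c))
      ≤ (d:ℝ) * (Real.log (Real.Gamma (a+1)) - Real.log (Real.Gamma (b+1)))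
        + (n:ℝ) * (Real.log (Real.Gamma (e+1)) - Real.log (Real.Gamma (c+1))) :=
    add_le_add (mul_le_mul_of_nonneg_left (sub_le_sub h1 h2) hdR.le)
      (mul_le_mul_of_nonneg_left (sub_le_sub h3 h4) hnR.le)
  refine le_trans (le_of_eq ?_) step
  -- now an identity between logs
  have hfrac : (1 - δ)/(1 + δ) = (M - δ * M)/(M + δ * M) := by
    rw [div_eq_div_iff (by linarith) (by linarith)]
    ring
  rw [Real.log_mul (by positivity) (by positivity), Real.log_mul (by positivity) (by positivity),
    Real.log_pow, Real.log_rpow hbase2, Real.log_rpow hbase3,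
    Real.log_div (ne_of_gt hsqrtpos) (ne_of_gt (Real.exp_pos 1)), Real.log_exp,
    hfrac, Real.log_div (ne_of_gt hMm0) (ne_of_gt hMp0),
    Real.log_div (ne_of_gt hdR) (ne_of_gt hnR),
    ha_def, hb_def, hc_def, he_def,
    Real.log_div (ne_of_gt hMm0) (ne_of_gt hdR),
    Real.log_div (ne_of_gt hMp0) (ne_of_gt hdR),
    Real.log_div (ne_of_gt hMm0) (ne_of_gt hnR),
    Real.log_div (ne_of_gt hMp0) (ne_of_gt hnR)]
  push_cast
  field_simp
  ring


end
end

section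
/- Let d ≥ 2 and 1 ≤ n ≤ d − 1 be integers and let M > 0 be a real number with 2M ≥ d. Then Φ_d(M,M)/Φ_n(M,M) = (Γ(2M/n + 1))^n / (Γ(2M/d + 1))^d ≥ (√(2π))^n · e^{−d} · (d/(2M))^{(d−n)/2} · (d/n)^{2M + n/2}. -/
open MeasureTheory

noncomputable section

section AuxStirling
open Real Filter Topology
set_option maxHeartbeats 1000000

lemma tendsto_logdiff : Tendsto (fun y : ℝ => Real.log (y+1) - Real.log y) atTop (𝓝 0) := by
  have h1 : Tendsto (fun y : ℝ => 1 + 1/y) atTop (𝓝 1) := by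
    simpa using tendsto_const_nhds.add (tendsto_inv_atTop_zero (𝕜 := ℝ))
  have h2 : Tendsto (fun y : ℝ => Real.log (1 + 1/y)) atTop (𝓝 0) := by
    simpa [Function.comp_def] using (Real.continuousAt_log one_ne_zero).tendsto.comp h1
  apply h2.congr'
  filter_upwards [eventually_gt_atTop (0:ℝ)] with y hy
  rw [← Real.log_div (by linarith) hy.ne']
  congr 1
  field_simp

lemma log_ineq_A {x : ℝ} (hx : 0 < x) : 1/(x + 1/2) ≤ Real.log (x+1) - Real.log x := by
  set F : ℝ → ℝ := fun y => Real.log (y+1) - Real.log y - (y + 1/2)⁻¹ with hF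
  have hderiv : ∀ y : ℝ, 0 < y → HasDerivAt F (1/(y+1) - 1/y + ((y+1/2)^2)⁻¹) y := by
    intro y hy0
    have h1 : HasDerivAt (fun y : ℝ => Real.log (y+1)) (1/(y+1)) y := by
      simpa using (((hasDerivAt_id y).add_const 1).log (by simp only [id]; linarith))
    have h2 : HasDerivAt Real.log (1/y) y := by
      simpa using Real.hasDerivAt_log hy0.ne'
    have h3 : HasDerivAt (fun y : ℝ => (y + 1/2)⁻¹) (-1/((y+1/2)^2)) y := by
      exact (((hasDerivAt_id y).add_const (1/2)).fun_inv (by simp only [id]; linarith))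
    have := (h1.fun_sub h2).fun_sub h3
    exact this.congr_deriv (by ring)
  have hanti : AntitoneOn F (Set.Ici x) := by
    apply antitoneOn_of_deriv_nonpos (convex_Ici x)
    · exact fun y hy => (hderiv y (lt_of_lt_of_le hx hy)).continuousAt.continuousWithinAt
    · rw [interior_Ici]
      exact fun y hy => ((hderiv y (hx.trans hy)).differentiableAt).differentiableWithinAt
    · rw [interior_Ici]
      intro y hy
      have hy0 : 0 < y := hx.trans hy
      rw [(hderiv y hy0).deriv]
      have e1 : 1/(y+1) - 1/y = -((y*(y+1))⁻¹) := by field_simp; ring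
      have e2 : ((y+1/2)^2)⁻¹ ≤ (y*(y+1))⁻¹ := by
        apply inv_anti₀ (by positivity)
        nlinarith
      rw [e1]; linarith
  have hlim : Tendsto F atTop (𝓝 0) := by
    have h4 : Tendsto (fun y : ℝ => (y + 1/2)⁻¹) atTop (𝓝 0) :=
      (tendsto_atTop_add_const_right _ _ tendsto_id).inv_tendsto_atTop
    have h := tendsto_logdiff.sub h4
    rw [hF]; simpa using h
  have h0 : 0 ≤ F x := by
    apply le_of_tendsto hlim
    filter_upwards [eventually_ge_atTop x] with y hy
    exact hanti (Set.self_mem_Ici) hy hy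
  have : (x + 1/2)⁻¹ ≤ Real.log (x+1) - Real.log x := by
    simp only [hF] at h0; linarith
  rwa [one_div]

lemma log_ineq_B {x : ℝ} (hx : 0 < x) :
    Real.log (x+1) - Real.log x ≤ (x + 1/2) / (x*(x+1)) := by
  set G : ℝ → ℝ := fun y => Real.log (y+1) - Real.log y - (1/2)*y⁻¹ - (1/2)*(y+1)⁻¹ with hG
  have hderiv : ∀ y : ℝ, 0 < y →
      HasDerivAt G (1/(y+1) - 1/y + (1/2)/y^2 + (1/2)/(y+1)^2) y := by
    intro y hy0
    have h1 : HasDerivAt (fun y : ℝ => Real.log (y+1)) (1/(y+1)) y := by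
      simpa using (((hasDerivAt_id y).add_const 1).log (by simp only [id]; linarith))
    have h2 : HasDerivAt Real.log (1/y) y := by
      simpa using Real.hasDerivAt_log hy0.ne'
    have h3 : HasDerivAt (fun y : ℝ => y⁻¹) (-1/(y^2)) y := by
      simpa using (hasDerivAt_id y).fun_inv (by simp only [id]; linarith)
    have h4 : HasDerivAt (fun y : ℝ => (y+1)⁻¹) (-1/((y+1)^2)) y := by
      simpa using ((hasDerivAt_id y).add_const 1).fun_inv (by simp only [id]; linarith)
    have := ((h1.fun_sub h2).fun_sub (h3.const_mul (1/2))).fun_sub (h4.const_mul (1/2))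
    exact this.congr_deriv (by ring)
  have hmono : MonotoneOn G (Set.Ici x) := by
    apply monotoneOn_of_deriv_nonneg (convex_Ici x)
    · exact fun y hy => (hderiv y (lt_of_lt_of_le hx hy)).continuousAt.continuousWithinAt
    · rw [interior_Ici]
      exact fun y hy => ((hderiv y (hx.trans hy)).differentiableAt).differentiableWithinAt
    · rw [interior_Ici]
      intro y hy
      have hy0 : 0 < y := hx.trans hy
      rw [(hderiv y hy0).deriv]
      have e1 : 1/(y+1) - 1/y + (1/2)/y^2 + (1/2)/(y+1)^2
          = 1 / (2*y^2*(y+1)^2) := by field_simp; ring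
      rw [e1]; positivity
  have hlim : Tendsto G atTop (𝓝 0) := by
    have h4 : Tendsto (fun y : ℝ => y⁻¹) atTop (𝓝 0) := tendsto_inv_atTop_zero
    have h5 : Tendsto (fun y : ℝ => (y+1)⁻¹) atTop (𝓝 0) :=
      (tendsto_atTop_add_const_right _ _ tendsto_id).inv_tendsto_atTop
    have h := (tendsto_logdiff.sub (h4.const_mul (1/2))).sub (h5.const_mul (1/2))
    rw [hG]; simpa using h
  have h0 : G x ≤ 0 := by
    apply ge_of_tendsto hlim
    filter_upwards [eventually_ge_atTop x] with y hy
    exact hmono (Set.self_mem_Ici) hy hy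
  simp only [hG] at h0
  have e : (1/2)*x⁻¹ + (1/2)*(x+1)⁻¹ = (x + 1/2)/(x*(x+1)) := by
    field_simp; ring
  linarith [e]
noncomputable def dfun (x : ℝ) : ℝ := (x + 1/2) * (Real.log (x+1) - Real.log x) - 1
noncomputable def Sfun (x : ℝ) : ℝ :=
  Real.log (Real.Gamma (x+1)) - (x + 1/2) * Real.log x + x

lemma dfun_nonneg {x : ℝ} (hx : 0 < x) : 0 ≤ dfun x := by
  have h := log_ineq_A hx
  have hp : (0:ℝ) < x + 1/2 := by linarith
  have := mul_le_mul_of_nonneg_left h hp.le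
  rw [mul_one_div, div_self hp.ne'] at this
  unfold dfun; linarith

lemma dfun_antitoneOn : AntitoneOn dfun (Set.Ioi (0:ℝ)) := by
  have hderiv : ∀ y : ℝ, 0 < y →
      HasDerivAt dfun ((Real.log (y+1) - Real.log y) + (y + 1/2) * (1/(y+1) - 1/y)) y := by
    intro y hy0
    have h1 : HasDerivAt (fun y : ℝ => Real.log (y+1)) (1/(y+1)) y := by
      simpa using (((hasDerivAt_id y).add_const 1).log (by simp only [id]; linarith))
    have h2 : HasDerivAt Real.log (1/y) y := by
      simpa using Real.hasDerivAt_log hy0.ne'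
    have h4 : HasDerivAt (fun y : ℝ => y + 1/2) 1 y := (hasDerivAt_id y).add_const (1/2)
    have := (h4.fun_mul (h1.fun_sub h2)).sub_const 1
    unfold dfun
    exact this.congr_deriv (by ring)
  apply antitoneOn_of_deriv_nonpos (convex_Ioi 0)
  · exact fun y hy => (hderiv y hy).continuousAt.continuousWithinAt
  · rw [interior_Ioi]
    exact fun y hy => ((hderiv y hy).differentiableAt).differentiableWithinAt
  · rw [interior_Ioi]
    intro y hy
    rw [(hderiv y hy).deriv]
    have hB := log_ineq_B hy
    have hy0 : (0:ℝ) < y := hy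
    have e1 : (y + 1/2) * (1/(y+1) - 1/y) = -((y+1/2) / (y*(y+1))) := by
      rw [div_sub_div _ _ (by linarith : y+(1:ℝ) ≠ 0) hy0.ne', eq_comm, neg_eq_iff_eq_neg,
        div_eq_iff (by positivity : y*(y+1) ≠ 0)]
      field_simp
      ring
    rw [e1]; linarith

lemma Sfun_step {x : ℝ} (hx : 0 < x) : Sfun x - Sfun (x+1) = dfun x := by
  have hG1 : (0:ℝ) < Real.Gamma (x+1) := Real.Gamma_pos_of_pos (by linarith)
  have hrec : Real.Gamma (x+1+1) = (x+1) * Real.Gamma (x+1) :=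
    Real.Gamma_add_one (by linarith)
  unfold Sfun dfun
  rw [hrec, Real.log_mul (by linarith) hG1.ne']
  ring
lemma gautschi_upper (n : ℕ) (hn : 1 ≤ n) {s : ℝ} (h0 : 0 ≤ s) (h1 : s ≤ 1) :
    Real.log (Real.Gamma ((n + s) + 1)) ≤ Real.log (n.factorial) + s * Real.log (n+1) := by
  have hc := Real.convexOn_log_Gamma
  have hn0 : (0:ℝ) < n := by exact_mod_cast hn
  have key := hc.2 (Set.mem_Ioi.mpr (by linarith : (0:ℝ) < (n:ℝ)+1))
    (Set.mem_Ioi.mpr (by linarith : (0:ℝ) < (n:ℝ)+2))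
    (by linarith : (0:ℝ) ≤ 1 - s) h0 (by ring)
  have harg : (1-s) • ((n:ℝ)+1) + s • ((n:ℝ)+2) = (n + s) + 1 := by
    simp [smul_eq_mul]; ring
  rw [harg] at key
  simp only [Function.comp_apply, smul_eq_mul] at key
  have e1 : Real.Gamma ((n:ℝ)+1) = n.factorial := Real.Gamma_nat_eq_factorial n
  have e2 : Real.Gamma ((n:ℝ)+2) = (n+1) * n.factorial := by
    have : ((n:ℝ)+2) = ((n:ℝ)+1) + 1 := by ring
    rw [this, Real.Gamma_add_one (by linarith), e1]
  rw [e1, e2, Real.log_mul (by positivity) (by positivity)] at key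
  calc Real.log (Real.Gamma ((n + s) + 1)) ≤
      (1-s) * Real.log (n.factorial) + s * (Real.log ((n:ℝ)+1) + Real.log (n.factorial)) := key
    _ = Real.log (n.factorial) + s * Real.log ((n:ℝ)+1) := by ring

lemma gautschi_lower (n : ℕ) (hn : 1 ≤ n) {s : ℝ} (h0 : 0 ≤ s) (h1 : s ≤ 1) :
    Real.log (n.factorial) + s * Real.log (n + s) ≤ Real.log (Real.Gamma ((n + s) + 1)) := by
  have hc := Real.convexOn_log_Gamma
  have hn0 : (0:ℝ) < n := by exact_mod_cast hn
  have hns : (0:ℝ) < (n:ℝ) + s := by linarith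
  have key := hc.2 (Set.mem_Ioi.mpr hns)
    (Set.mem_Ioi.mpr (by linarith : (0:ℝ) < (n:ℝ)+s+1))
    h0 (by linarith : (0:ℝ) ≤ 1 - s) (by ring)
  have harg : s • ((n:ℝ)+s) + (1-s) • ((n:ℝ)+s+1) = (n:ℝ) + 1 := by
    simp [smul_eq_mul]; ring
  rw [harg] at key
  simp only [Function.comp_apply, smul_eq_mul] at key
  have e1 : Real.Gamma ((n:ℝ)+1) = n.factorial := Real.Gamma_nat_eq_factorial n
  have e3 : Real.Gamma ((n:ℝ)+s+1) = ((n:ℝ)+s) * Real.Gamma ((n:ℝ)+s) :=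
    Real.Gamma_add_one hns.ne'
  have hGpos : (0:ℝ) < Real.Gamma ((n:ℝ)+s) := Real.Gamma_pos_of_pos hns
  rw [e1, e3, Real.log_mul hns.ne' hGpos.ne'] at key
  -- key : log n! ≤ s * log Γ(n+s) + (1-s) * (log(n+s) + log Γ(n+s))
  have : Real.log (n.factorial) ≤ Real.log (Real.Gamma ((n:ℝ)+s)) + (1-s) * Real.log ((n:ℝ)+s) := by
    calc Real.log (n.factorial) ≤ s * Real.log (Real.Gamma ((n:ℝ)+s))
        + (1-s) * (Real.log ((n:ℝ)+s) + Real.log (Real.Gamma ((n:ℝ)+s))) := key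
      _ = Real.log (Real.Gamma ((n:ℝ)+s)) + (1-s) * Real.log ((n:ℝ)+s) := by ring
  have e4 : Real.log (Real.Gamma ((n:ℝ)+s+1)) =
      Real.log ((n:ℝ)+s) + Real.log (Real.Gamma ((n:ℝ)+s)) := by
    rw [e3, Real.log_mul hns.ne' hGpos.ne']
  have goal_eq : ((n:ℝ) + s) + 1 = (n:ℝ)+s+1 := by ring
  rw [goal_eq, e4]
  linarith

lemma key_lim {s : ℝ} (h0 : 0 ≤ s) (h1 : s ≤ 1) :
    Tendsto (fun n : ℕ => Sfun (n + s)) atTop (𝓝 ((1/2) * Real.log (2*Real.pi))) := by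
  -- auxiliary limits
  have hstirl : Tendsto (fun n : ℕ => Real.log (Stirling.stirlingSeq n)) atTop
      (𝓝 (Real.log (Real.sqrt π))) :=
    ((Real.continuousAt_log (by positivity)).tendsto).comp Stirling.tendsto_stirlingSeq_sqrt_pi
  have hlog_div : ∀ t : ℝ, 0 ≤ t → Tendsto (fun n : ℕ =>
      Real.log ((n:ℝ) + t) - Real.log (n:ℝ)) atTop (𝓝 0) := by
    intro t ht
    have h2 : Tendsto (fun n : ℕ => 1 + t/(n:ℝ)) atTop (𝓝 1) := by
      simpa using tendsto_const_nhds.add ((tendsto_const_div_atTop_nhds_zero_nat t))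
    have h3 : Tendsto (fun n : ℕ => Real.log (1 + t/(n:ℝ))) atTop (𝓝 0) := by
      simpa [Function.comp_def] using (Real.continuousAt_log one_ne_zero).tendsto.comp h2
    apply h3.congr'
    filter_upwards [eventually_ge_atTop 1] with n hn
    have hn0 : (0:ℝ) < n := by exact_mod_cast hn
    rw [← Real.log_div (by linarith) hn0.ne']
    congr 1
    field_simp
  have hB : Tendsto (fun n : ℕ => ((n:ℝ) + 1/2) * (Real.log ((n:ℝ)+s) - Real.log (n:ℝ)))
      atTop (𝓝 s) := by
    have hmain : Tendsto (fun n : ℕ => (n:ℝ) * Real.log (1 + s/(n:ℝ))) atTop (𝓝 s) :=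
      (Real.tendsto_mul_log_one_add_div_atTop s).comp tendsto_natCast_atTop_atTop
    have hhalf : Tendsto (fun n : ℕ => (1/2) * (Real.log ((n:ℝ)+s) - Real.log (n:ℝ)))
        atTop (𝓝 0) := by
      have := (hlog_div s h0).const_mul (1/2); rwa [mul_zero] at this
    have hmain' : Tendsto (fun n : ℕ => (n:ℝ) * (Real.log ((n:ℝ)+s) - Real.log (n:ℝ)))
        atTop (𝓝 s) := by
      apply hmain.congr'
      filter_upwards [eventually_ge_atTop 1] with n hn
      have hn0 : (0:ℝ) < n := by exact_mod_cast hn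
      rw [← Real.log_div (by linarith) hn0.ne']
      congr 2
      field_simp
    have := hmain'.add hhalf
    rw [add_zero] at this
    apply this.congr
    intro n; ring
  have hC : Tendsto (fun n : ℕ => s * (Real.log ((n:ℝ)+1) - Real.log ((n:ℝ)+s)))
      atTop (𝓝 0) := by
    have := ((hlog_div 1 zero_le_one).sub (hlog_div s h0)).const_mul s
    rw [sub_zero, mul_zero] at this
    apply this.congr
    intro n; ring
  -- the bounding sequences
  set c : ℝ := (1/2) * Real.log (2*Real.pi) with hc
  have hL : Tendsto (fun n : ℕ => Real.log (Stirling.stirlingSeq n) + (1/2)*Real.log 2 + s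
      - ((n:ℝ) + 1/2) * (Real.log ((n:ℝ)+s) - Real.log (n:ℝ))) atTop (𝓝 c) := by
    have := ((hstirl.add_const ((1/2)*Real.log 2)).add_const s).sub hB
    convert this using 2
    rw [hc, Real.log_sqrt Real.pi_pos.le, Real.log_mul two_ne_zero Real.pi_ne_zero]
    ring
  have hU : Tendsto (fun n : ℕ => (Real.log (Stirling.stirlingSeq n) + (1/2)*Real.log 2 + s
      - ((n:ℝ) + 1/2) * (Real.log ((n:ℝ)+s) - Real.log (n:ℝ)))
      + s * (Real.log ((n:ℝ)+1) - Real.log ((n:ℝ)+s))) atTop (𝓝 c) := by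
    have := hL.add hC
    rwa [add_zero] at this
  apply tendsto_of_tendsto_of_tendsto_of_le_of_le' hL hU
  · -- lower bound eventually
    filter_upwards [eventually_ge_atTop 1] with n hn
    have hn0 : (0:ℝ) < n := by exact_mod_cast hn
    have hfac : Real.log (n.factorial) = Real.log (Stirling.stirlingSeq n)
        + 1/2*Real.log (2*(n:ℝ)) + (n:ℝ) * Real.log ((n:ℝ) / Real.exp 1) := by
      have := Stirling.log_stirlingSeq_formula n
      linarith
    have hlow := gautschi_lower n hn h0 h1
    have hexp : Real.log ((n:ℝ) / Real.exp 1) = Real.log (n:ℝ) - 1 := by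
      rw [Real.log_div hn0.ne' (Real.exp_ne_zero 1), Real.log_exp]
    have h2n : Real.log (2*(n:ℝ)) = Real.log 2 + Real.log (n:ℝ) :=
      Real.log_mul two_ne_zero hn0.ne'
    unfold Sfun
    rw [hexp, h2n] at hfac
    rw [hfac] at hlow
    ring_nf at hlow ⊢
    linarith [hlow]
  · -- upper bound eventually
    filter_upwards [eventually_ge_atTop 1] with n hn
    have hn0 : (0:ℝ) < n := by exact_mod_cast hn
    have hfac : Real.log (n.factorial) = Real.log (Stirling.stirlingSeq n)
        + 1/2*Real.log (2*(n:ℝ)) + (n:ℝ) * Real.log ((n:ℝ) / Real.exp 1) := by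
      have := Stirling.log_stirlingSeq_formula n
      linarith
    have hup := gautschi_upper n hn h0 h1
    have hexp : Real.log ((n:ℝ) / Real.exp 1) = Real.log (n:ℝ) - 1 := by
      rw [Real.log_div hn0.ne' (Real.exp_ne_zero 1), Real.log_exp]
    have h2n : Real.log (2*(n:ℝ)) = Real.log 2 + Real.log (n:ℝ) :=
      Real.log_mul two_ne_zero hn0.ne'
    unfold Sfun
    rw [hexp, h2n] at hfac
    rw [hfac] at hup
    ring_nf at hup ⊢
    linarith [hup]
lemma Sfun_tendsto {x : ℝ} (hx : 0 < x) :
    Tendsto (fun N : ℕ => Sfun (x + N)) atTop (𝓝 ((1/2) * Real.log (2*Real.pi))) := by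
  have h0 : 0 ≤ x - ⌊x⌋₊ := by
    have := Nat.floor_le hx.le
    linarith
  have h1 : x - ⌊x⌋₊ ≤ 1 := by
    have := Nat.lt_floor_add_one x
    linarith
  have hcomp : Tendsto (fun N : ℕ => N + ⌊x⌋₊) atTop atTop := tendsto_add_atTop_nat _
  have h2 := (key_lim h0 h1).comp hcomp
  apply h2.congr
  intro N
  simp only [Function.comp_apply]
  congr 1
  push_cast
  ring

lemma Sfun_ge {x : ℝ} (hx : 0 < x) : (1/2) * Real.log (2*Real.pi) ≤ Sfun x := by
  have mono : ∀ N : ℕ, Sfun (x + N) ≤ Sfun x := by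
    intro N
    induction N with
    | zero => simp
    | succ n ih =>
      have hxn : 0 < x + n := by positivity
      have := Sfun_step hxn
      have hd := dfun_nonneg hxn
      have e : x + (n+1:ℕ) = (x + n) + 1 := by push_cast; ring
      rw [e]
      linarith
  exact le_of_tendsto (Sfun_tendsto hx) (Eventually.of_forall mono)

lemma Sfun_le_one {x : ℝ} (hx : 1 ≤ x) : Sfun x ≤ 1 := by
  have hx0 : 0 < x := lt_of_lt_of_le zero_lt_one hx
  have key : ∀ N : ℕ, Sfun x - Sfun (x + N) ≤ Sfun 1 - Sfun (1 + N) := by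
    intro N
    induction N with
    | zero => simp
    | succ n ih =>
      have hxn : 0 < x + n := by positivity
      have h1n : (0:ℝ) < 1 + n := by positivity
      have e1 : x + (n+1:ℕ) = (x + n) + 1 := by push_cast; ring
      have e2 : 1 + ((n+1:ℕ):ℝ) = (1 + n) + 1 := by push_cast; ring
      rw [e1, e2]
      have s1 := Sfun_step hxn
      have s2 := Sfun_step h1n
      have hanti := dfun_antitoneOn (Set.mem_Ioi.mpr h1n) (Set.mem_Ioi.mpr hxn)
        (by linarith : (1:ℝ) + n ≤ x + n)
      linarith
  have hS1 : Sfun 1 = 1 := by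
    unfold Sfun
    rw [show (1:ℝ)+1 = 2 by norm_num, Real.Gamma_two, Real.log_one]
    ring
  have hdiff : Tendsto (fun N : ℕ => Sfun (x + N) - Sfun (1 + N)) atTop (𝓝 0) := by
    have := (Sfun_tendsto hx0).sub (Sfun_tendsto zero_lt_one)
    rwa [sub_self] at this
  have hfin : Sfun x - Sfun 1 ≤ 0 := by
    apply ge_of_tendsto hdiff
    filter_upwards with N
    linarith [key N]
  linarith

/-- Stirling lower bound for the Gamma function. -/
lemma Gamma_lower {a : ℝ} (ha : 0 < a) :
    Real.sqrt (2*Real.pi) * a ^ (a + 1/2) * Real.exp (-a) ≤ Real.Gamma (a+1) := by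
  have hS := Sfun_ge ha
  have hG : 0 < Real.Gamma (a+1) := Real.Gamma_pos_of_pos (by linarith)
  have hL : (0:ℝ) < Real.sqrt (2*Real.pi) * a ^ (a + 1/2) * Real.exp (-a) := by
    have : (0:ℝ) < Real.sqrt (2*Real.pi) := Real.sqrt_pos.mpr (by positivity)
    positivity
  rw [← Real.log_le_log_iff hL hG]
  rw [Real.log_mul (by positivity) (Real.exp_ne_zero _), Real.log_mul
    (by positivity) (by positivity), Real.log_exp, Real.log_rpow ha,
    Real.log_sqrt (by positivity)]
  unfold Sfun at hS
  linarith

/-- Stirling-type upper bound for the Gamma function, for `b ≥ 1`. -/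
lemma Gamma_upper {b : ℝ} (hb : 1 ≤ b) :
    Real.Gamma (b+1) ≤ b ^ (b + 1/2) * Real.exp (1-b) := by
  have hb0 : 0 < b := lt_of_lt_of_le zero_lt_one hb
  have hS := Sfun_le_one hb
  have hG : 0 < Real.Gamma (b+1) := Real.Gamma_pos_of_pos (by linarith)
  have hR : (0:ℝ) < b ^ (b + 1/2) * Real.exp (1-b) := by positivity
  rw [← Real.log_le_log_iff hG hR]
  rw [Real.log_mul (by positivity) (Real.exp_ne_zero _), Real.log_exp,
    Real.log_rpow hb0]
  unfold Sfun at hS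
  linarith

end AuxStirling

set_option maxHeartbeats 1000000 in
theorem stmt_4 (d n : ℕ) (hd : 2 ≤ d) (hn1 : 1 ≤ n) (hn2 : n ≤ d - 1)
    (M : ℝ) (hM : 0 < M) (hdM : (d : ℝ) ≤ 2 * M) :
    Phi d M M / Phi n M M
        = (Real.Gamma (2 * M / n + 1)) ^ n / (Real.Gamma (2 * M / d + 1)) ^ d ∧
    (Real.sqrt (2 * Real.pi)) ^ n * Real.exp (-(d : ℝ)) *
          ((d : ℝ) / (2 * M)) ^ (((d : ℝ) - n) / 2) * ((d : ℝ) / n) ^ (2 * M + n / 2)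
      ≤ (Real.Gamma (2 * M / n + 1)) ^ n / (Real.Gamma (2 * M / d + 1)) ^ d := by
  have hn0 : (0:ℝ) < n := by exact_mod_cast hn1
  have hd0 : (0:ℝ) < d := by positivity
  have hnd : (n:ℝ) ≤ d := by exact_mod_cast le_trans hn2 (Nat.sub_le d 1)
  set a : ℝ := 2*M/(n:ℝ) with hadef
  set b : ℝ := 2*M/(d:ℝ) with hbdef
  have ha : 0 < a := by positivity
  have hb0 : 0 < b := by positivity
  have hb1 : 1 ≤ b := (one_le_div hd0).mpr hdM
  have hna : (n:ℝ) * a = 2*M := by rw [hadef]; field_simp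
  have hdb : (d:ℝ) * b = 2*M := by rw [hbdef]; field_simp
  have hGa : 0 < Real.Gamma (a+1) := Real.Gamma_pos_of_pos (by linarith)
  have hGb : 0 < Real.Gamma (b+1) := Real.Gamma_pos_of_pos (by linarith)
  have hab2 : 2*M/(n:ℝ) + 1 = a + 1 := rfl
  have hbb2 : 2*M/(d:ℝ) + 1 = b + 1 := rfl
  constructor
  · -- equality part
    have ePhid : Phi d M M = (1 / Real.Gamma (2*M/(d:ℝ) + 1))^d := by
      unfold Phi
      rw [sub_self, zero_div, zero_add, Real.Gamma_one,
        show M + M = 2*M from (two_mul M).symm]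
    have ePhin : Phi n M M = (1 / Real.Gamma (2*M/(n:ℝ) + 1))^n := by
      unfold Phi
      rw [sub_self, zero_div, zero_add, Real.Gamma_one,
        show M + M = 2*M from (two_mul M).symm]
    rw [ePhid, ePhin, hab2, hbb2]
    field_simp
    rw [← mul_pow, ← mul_pow, one_div_mul_cancel hGb.ne', one_div_mul_cancel hGa.ne', one_pow,
      one_pow]
  · -- inequality part
    rw [hab2, hbb2]
    set E : ℝ := 2*M + (n:ℝ)/2 with hE
    set X : ℝ := 2*M + (d:ℝ)/2 with hX
    have e1 : (Real.sqrt (2*Real.pi) * a ^ (a + 1/2) * Real.exp (-a))^n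
        = (Real.sqrt (2*Real.pi))^n * a ^ E * Real.exp (-(2*M)) := by
      rw [mul_pow, mul_pow, ← Real.rpow_natCast (a^(a+1/2)) n, ← Real.rpow_mul ha.le,
        ← Real.exp_nat_mul,
        show (a+1/2)*(n:ℝ) = E by rw [hE, ← hna]; ring,
        show (n:ℝ)*(-a) = -(2*M) by rw [← hna]; ring]
    have e2 : (b ^ (b + 1/2) * Real.exp (1-b))^d
        = b ^ X * Real.exp ((d:ℝ) - 2*M) := by
      rw [mul_pow, ← Real.rpow_natCast (b^(b+1/2)) d, ← Real.rpow_mul hb0.le,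
        ← Real.exp_nat_mul,
        show (b+1/2)*(d:ℝ) = X by rw [hX, ← hdb]; ring,
        show (d:ℝ)*(1-b) = (d:ℝ) - 2*M by rw [← hdb]; ring]
    have h1 : (Real.sqrt (2*Real.pi))^n * a ^ E * Real.exp (-(2*M))
        ≤ Real.Gamma (a+1)^n := by
      rw [← e1]
      exact pow_le_pow_left₀ (by positivity) (Gamma_lower ha) n
    have h2 : Real.Gamma (b+1)^d ≤ b ^ X * Real.exp ((d:ℝ) - 2*M) := by
      rw [← e2]
      exact pow_le_pow_left₀ hGb.le (Gamma_upper hb1) d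
    have hDpos : 0 < b ^ X * Real.exp ((d:ℝ) - 2*M) := by positivity
    have hquot : ((Real.sqrt (2*Real.pi))^n * a ^ E * Real.exp (-(2*M)))
        / (b ^ X * Real.exp ((d:ℝ) - 2*M))
        ≤ Real.Gamma (a+1)^n / Real.Gamma (b+1)^d :=
      div_le_div₀ (by positivity) h1 (by positivity) h2
    refine le_trans (le_of_eq ?_) hquot
    -- equality of the explicit expressions
    have hb' : (d:ℝ)/(2*M) = b⁻¹ := by rw [hbdef, inv_div]
    have hdn : (d:ℝ)/(n:ℝ) = a/b := by
      rw [hadef, hbdef]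
      rw [div_div_div_eq]
      rw [mul_comm (2*M) (d:ℝ), mul_div_mul_right _ _ (by positivity : (2*M) ≠ 0)]
    have t1 : ((d:ℝ)/(2*M))^(((d:ℝ)-(n:ℝ))/2) = b ^ (-(((d:ℝ)-(n:ℝ))/2)) := by
      rw [hb', Real.inv_rpow hb0.le, ← Real.rpow_neg hb0.le]
    have t2 : ((d:ℝ)/(n:ℝ))^E = a^E * b^(-E) := by
      rw [hdn, Real.div_rpow ha.le hb0.le, div_eq_mul_inv, ← Real.rpow_neg hb0.le]
    have t3 : b ^ (-(((d:ℝ)-(n:ℝ))/2)) * b ^ (-E) = b ^ (-X) := by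
      rw [← Real.rpow_add hb0]; congr 1; rw [hE, hX]; ring
    have e4 : ((d:ℝ)/(2*M))^(((d:ℝ)-(n:ℝ))/2) * ((d:ℝ)/(n:ℝ))^E
        = a^E * b^(-X) := by
      rw [t1, t2,
        show b ^ (-(((d:ℝ)-(n:ℝ))/2)) * (a ^ E * b ^ (-E))
          = a ^ E * (b ^ (-(((d:ℝ)-(n:ℝ))/2)) * b ^ (-E)) from by ring, t3]
    rw [eq_div_iff hDpos.ne']
    calc Real.sqrt (2*Real.pi)^n * Real.exp (-(d:ℝ)) *
          ((d:ℝ)/(2*M))^(((d:ℝ)-(n:ℝ))/2) * ((d:ℝ)/(n:ℝ))^E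
          * (b ^ X * Real.exp ((d:ℝ) - 2*M))
        = Real.sqrt (2*Real.pi)^n * (((d:ℝ)/(2*M))^(((d:ℝ)-(n:ℝ))/2) * ((d:ℝ)/(n:ℝ))^E)
          * b ^ X * (Real.exp (-(d:ℝ)) * Real.exp ((d:ℝ) - 2*M)) := by ring
      _ = Real.sqrt (2*Real.pi)^n * (a^E * b^(-X)) * b ^ X * Real.exp (-(2*M)) := by
          rw [e4, ← Real.exp_add]; congr 2; ring
      _ = Real.sqrt (2*Real.pi)^n * a^E * (b^(-X) * b^X) * Real.exp (-(2*M)) := by ring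
      _ = Real.sqrt (2*Real.pi)^n * a ^ E * Real.exp (-(2*M)) := by
          rw [← Real.rpow_add hb0, neg_add_cancel, Real.rpow_zero, mul_one]

end
end

section
/- Let R > 0 and define F_1(R, ε) = ((1−ε)^{1−ε}/(1+ε)^{1+ε}) · (εR)^{2ε} for ε ∈ (0,1). Then the minimum of F_1(R, ·) over (0,1) is attained at ε_min = 1/√(1+R²), the minimum value equals (R/(√(1+R²) + 1))², and this value is strictly less than 1; that is, F_1(R, ε) ≥ (R/(√(1+R²)+1))² for all ε ∈ (0,1), with equality at ε = ε_min, and (R/(√(1+R²)+1))² < 1. -/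
open MeasureTheory

noncomputable section

/-- F₁(R,ε) = ((1−ε)^{1−ε}/(1+ε)^{1+ε})·(εR)^{2ε}. -/
def F1 (R ε : ℝ) : ℝ := ((1 - ε) ^ (1 - ε) / (1 + ε) ^ (1 + ε)) * (ε * R) ^ (2 * ε)

private def G (R : ℝ) : ℝ → ℝ := fun t =>
  (1 - t) * Real.log (1 - t) - (1 + t) * Real.log (1 + t) + 2 * t * Real.log (t * R)

private lemma F1_eq_exp (R ε : ℝ) (hR : 0 < R) (h0 : 0 < ε) (h1 : ε < 1) :
    F1 R ε = Real.exp (G R ε) := by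
  rw [F1, G, Real.rpow_def_of_pos (by linarith), Real.rpow_def_of_pos (by linarith),
    Real.rpow_def_of_pos (by positivity), ← Real.exp_sub, ← Real.exp_add]
  congr 1
  ring

private lemma G_hasDerivAt (R ε : ℝ) (hR : 0 < R) (h0 : 0 < ε) (h1 : ε < 1) :
    HasDerivAt (G R) (2 * Real.log (ε * R) - Real.log (1 - ε) - Real.log (1 + ε)) ε := by
  have e1 : (1:ℝ) - ε ≠ 0 := by linarith
  have e2 : (1:ℝ) + ε ≠ 0 := by linarith
  have e3 : ε * R ≠ 0 := by positivity
  have h1' : HasDerivAt (fun t : ℝ => 1 - t) (-1) ε := by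
    simpa using (hasDerivAt_id ε).const_sub 1
  have h2' : HasDerivAt (fun t : ℝ => 1 + t) 1 ε := by
    simpa using (hasDerivAt_id ε).const_add 1
  have h3' : HasDerivAt (fun t : ℝ => t * R) R ε := by
    simpa using (hasDerivAt_id ε).mul_const R
  have hl1 := h1'.log e1
  have hl2 := h2'.log e2
  have hl3 := h3'.log e3
  have hA := h1'.mul hl1
  have hB := h2'.mul hl2
  have hC := ((hasDerivAt_id ε).const_mul (2:ℝ)).mul hl3
  have := (hA.sub hB).add hC
  refine this.congr_deriv ?_
  simp only [id]
  field_simp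
  ring

theorem stmt_13 (R : ℝ) (hR : 0 < R) :
    1 / Real.sqrt (1 + R ^ 2) ∈ Set.Ioo (0 : ℝ) 1 ∧
    (∀ ε ∈ Set.Ioo (0 : ℝ) 1, (R / (Real.sqrt (1 + R ^ 2) + 1)) ^ 2 ≤ F1 R ε) ∧
    F1 R (1 / Real.sqrt (1 + R ^ 2)) = (R / (Real.sqrt (1 + R ^ 2) + 1)) ^ 2 ∧
    (R / (Real.sqrt (1 + R ^ 2) + 1)) ^ 2 < 1 := by
  have hR2 : (0:ℝ) < 1 + R ^ 2 := by positivity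
  set s := Real.sqrt (1 + R ^ 2) with hs_def
  have hssq : s ^ 2 = 1 + R ^ 2 := Real.sq_sqrt hR2.le
  have hs1 : 1 < s := by nlinarith [Real.sqrt_nonneg (1 + R ^ 2)]
  have hs0 : 0 < s := by linarith
  have hsne : s ≠ 0 := hs0.ne'
  have hsm1 : (0:ℝ) < s - 1 := by linarith
  have hsp1 : (0:ℝ) < s + 1 := by linarith
  have hε0 : 0 < 1 / s := by positivity
  have hε1 : 1 / s < 1 := by rw [div_lt_one hs0]; exact hs1
  -- R^2 = (s-1)(s+1)
  have hRsq : R ^ 2 = (s - 1) * (s + 1) := by nlinarith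
  -- log R relation
  have hlogR : 2 * Real.log R = Real.log (s - 1) + Real.log (s + 1) := by
    have : Real.log (R ^ 2) = Real.log ((s - 1) * (s + 1)) := by rw [hRsq]
    rwa [Real.log_pow, Real.log_mul hsm1.ne' hsp1.ne', Nat.cast_ofNat] at this
  -- value at the minimum
  have hGmin : G R (1 / s) = Real.log (s - 1) - Real.log (s + 1) := by
    have e1 : (1:ℝ) - 1 / s = (s - 1) / s := by field_simp
    have e2 : (1:ℝ) + 1 / s = (s + 1) / s := by field_simp
    have e3 : (1:ℝ) / s * R = R / s := by ring
    rw [G, e1, e2, e3, Real.log_div hsm1.ne' hsne, Real.log_div hsp1.ne' hsne,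
      Real.log_div hR.ne' hsne]
    field_simp
    linarith [hlogR]
  have hval : (R / (s + 1)) ^ 2 = (s - 1) / (s + 1) := by
    rw [div_pow, hRsq]
    field_simp
  -- monotonicity
  have hderivneg : ∀ x ∈ Set.Ioo (0:ℝ) (1 / s),
      2 * Real.log (x * R) - Real.log (1 - x) - Real.log (1 + x) < 0 := by
    intro x ⟨hx0, hx1⟩
    have hx1' : x < 1 := lt_trans hx1 hε1
    have hxs : x * s < 1 := (lt_div_iff₀ hs0).mp hx1
    have hlt : (x * R) ^ 2 < (1 - x) * (1 + x) := by nlinarith [mul_pos hx0 hs0]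
    have h2 : 2 * Real.log (x * R) = Real.log ((x * R) ^ 2) := by
      rw [Real.log_pow]; push_cast; ring
    have h3 : Real.log ((x * R) ^ 2) < Real.log ((1 - x) * (1 + x)) :=
      Real.log_lt_log (by positivity) hlt
    rw [Real.log_mul (by linarith) (by linarith)] at h3
    linarith [h2 ▸ h3]
  have hderivpos : ∀ x ∈ Set.Ioo (1 / s) (1:ℝ),
      0 < 2 * Real.log (x * R) - Real.log (1 - x) - Real.log (1 + x) := by
    intro x ⟨hx0, hx1⟩
    have hx0' : 0 < x := lt_trans hε0 hx0
    have hxs : 1 < x * s := by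
      rw [div_lt_iff₀ hs0] at hx0; linarith
    have hlt : (1 - x) * (1 + x) < (x * R) ^ 2 := by nlinarith [mul_pos hx0' hs0]
    have h2 : 2 * Real.log (x * R) = Real.log ((x * R) ^ 2) := by
      rw [Real.log_pow]; push_cast; ring
    have h3 : Real.log ((1 - x) * (1 + x)) < Real.log ((x * R) ^ 2) :=
      Real.log_lt_log (by nlinarith) hlt
    rw [Real.log_mul (by linarith) (by linarith)] at h3
    linarith [h2 ▸ h3]
  have hcont : ∀ x ∈ Set.Ioo (0:ℝ) 1, ContinuousAt (G R) x := fun x hx =>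
    (G_hasDerivAt R x hR hx.1 hx.2).continuousAt
  have hanti : StrictAntiOn (G R) (Set.Ioc 0 (1 / s)) := by
    apply strictAntiOn_of_deriv_neg (convex_Ioc 0 (1 / s))
    · exact fun x hx => (hcont x ⟨hx.1, lt_of_le_of_lt hx.2 hε1⟩).continuousWithinAt
    · intro x hx
      rw [interior_Ioc] at hx
      rw [(G_hasDerivAt R x hR hx.1 (lt_trans hx.2 hε1)).deriv]
      exact hderivneg x hx
  have hmono : StrictMonoOn (G R) (Set.Ico (1 / s) 1) := by
    apply strictMonoOn_of_deriv_pos (convex_Ico (1 / s) 1)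
    · exact fun x hx => (hcont x ⟨lt_of_lt_of_le hε0 hx.1, hx.2⟩).continuousWithinAt
    · intro x hx
      rw [interior_Ico] at hx
      rw [(G_hasDerivAt R x hR (lt_trans hε0 hx.1) hx.2).deriv]
      exact hderivpos x hx
  have hkey : ∀ ε ∈ Set.Ioo (0:ℝ) 1, G R (1 / s) ≤ G R ε := by
    intro ε ⟨h0, h1⟩
    rcases lt_trichotomy ε (1 / s) with h | h | h
    · exact le_of_lt (hanti ⟨h0, h.le⟩ ⟨hε0, le_refl _⟩ h)
    · rw [h]
    · exact le_of_lt (hmono ⟨le_refl _, hε1⟩ ⟨h.le, h1⟩ h)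
  have hF1min : F1 R (1 / s) = (R / (s + 1)) ^ 2 := by
    rw [F1_eq_exp R (1 / s) hR hε0 hε1, hGmin, Real.exp_sub, Real.exp_log hsm1,
      Real.exp_log hsp1, hval]
  refine ⟨⟨hε0, hε1⟩, ?_, hF1min, ?_⟩
  · intro ε hε
    rw [F1_eq_exp R ε hR hε.1 hε.2, ← hF1min, F1_eq_exp R (1 / s) hR hε0 hε1]
    exact Real.exp_le_exp.mpr (hkey ε hε)
  · rw [hval, div_lt_one hsp1]; linarith


end
end

section
/- Let d ≥ 1, q ≥ 1, s ≥ 1 be integers with q − s ≥ d, let R > 0 be real, and set ε = s/q. Then R^{2s} · Γ(s+1)² · Φ_d(q, s) ≤ e² (e/√(2π))^d · q · ( ((1−ε)^{1−ε}/(1+ε)^{1+ε}) · (εRd)^{2ε} )^{q}. -/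
open MeasureTheory

noncomputable section

open Real Filter Set Topology

noncomputable def Fst (x : ℝ) : ℝ := Real.log (Real.Gamma (x+1)) + x - (x+1/2) * Real.log x

lemma Gamma_eq_exp_Fst {x : ℝ} (hx : 0 < x) :
    Real.Gamma (x+1) = Real.exp (Fst x) * x ^ (x+1/2) * Real.exp (-x) := by
  have hG : 0 < Real.Gamma (x+1) := Real.Gamma_pos_of_pos (by linarith)
  have hx2 : x ^ (x+1/2) = Real.exp ((x+1/2) * Real.log x) := by
    rw [Real.rpow_def_of_pos hx, mul_comm]
  rw [hx2, Fst, ← Real.exp_add, ← Real.exp_add]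
  rw [show Real.log (Real.Gamma (x+1)) + x - (x + 1/2) * Real.log x + (x + 1/2) * Real.log x
      + -x = Real.log (Real.Gamma (x+1)) by ring, Real.exp_log hG]

noncomputable def gfn (x : ℝ) : ℝ := (x + 1/2) * (Real.log (x+1) - Real.log x) - 1

lemma Fst_step {x : ℝ} (hx : 0 < x) : Fst x - Fst (x+1) = gfn x := by
  have h1 : Real.Gamma (x+1+1) = (x+1) * Real.Gamma (x+1) := Real.Gamma_add_one (by linarith)
  have hG : 0 < Real.Gamma (x+1) := Real.Gamma_pos_of_pos (by linarith)
  rw [Fst, Fst, gfn, h1, Real.log_mul (by linarith) hG.ne']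
  ring


lemma aux1 {y : ℝ} (hy : 0 ≤ y) : (1-y) * Real.exp (2*y) ≤ 1+y := by
  have hm : Monotone (fun y : ℝ => (1+y) - (1-y)*Real.exp (2*y)) := by
    have hd : ∀ y : ℝ, HasDerivAt (fun y : ℝ => (1+y) - (1-y)*Real.exp (2*y))
        (1 - ((1-2*y) * Real.exp (2*y))) y := by
      intro y
      have h1 : HasDerivAt (fun y : ℝ => 2*y) 2 y := by simpa using (hasDerivAt_id y).const_mul 2
      have h2 : HasDerivAt (fun y : ℝ => Real.exp (2*y)) (Real.exp (2*y) * 2) y := h1.exp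
      have h3 : HasDerivAt (fun y : ℝ => (1-y)) (-1) y := by
        simpa using (hasDerivAt_id y).const_sub 1
      have h4 := (h3.mul h2)
      have h5 := ((hasDerivAt_id y).const_add 1).sub h4
      refine h5.congr_deriv ?_
      ring
    apply monotone_of_deriv_nonneg
    · intro y; exact (hd y).differentiableAt
    · intro y
      rw [(hd y).deriv]
      have : (1-2*y) * Real.exp (2*y) ≤ Real.exp (-(2*y)) * Real.exp (2*y) := by
        apply mul_le_mul_of_nonneg_right _ (Real.exp_nonneg _)
        linarith [Real.add_one_le_exp (-(2*y))]
      rw [← Real.exp_add] at this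
      simp at this
      linarith
  have := hm hy
  simp at this
  linarith

lemma log_ratio_ge {x : ℝ} (hx : 0 < x) : 2/(2*x+1) ≤ Real.log (x+1) - Real.log x := by
  set y : ℝ := 1/(2*x+1) with hy
  have hden : (0:ℝ) < 2*x+1 := by linarith
  have hy0 : 0 ≤ y := by positivity
  have hy1 : y < 1 := by rw [hy, div_lt_one hden]; linarith
  have hkey : Real.exp (2*y) ≤ (1+y)/(1-y) := by
    rw [le_div_iff₀ (by linarith)]
    have := aux1 hy0
    linarith [this]
  have hpos : (0:ℝ) < (1+y)/(1-y) := div_pos (by linarith) (by linarith)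
  have hlog : 2*y ≤ Real.log ((1+y)/(1-y)) := (Real.le_log_iff_exp_le hpos).2 hkey
  have hratio : (1+y)/(1-y) = (x+1)/x := by
    rw [hy]; field_simp; ring
  rw [hratio, Real.log_div (by linarith) hx.ne'] at hlog
  calc 2/(2*x+1) = 2*y := by rw [hy]; ring
    _ ≤ _ := hlog

lemma gfn_nonneg {x : ℝ} (hx : 0 < x) : 0 ≤ gfn x := by
  have h := log_ratio_ge hx
  have h2 : (x+1/2) * (2/(2*x+1)) = 1 := by field_simp
  have h3 : (x+1/2) * (2/(2*x+1)) ≤ (x+1/2) * (Real.log (x+1) - Real.log x) :=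
    mul_le_mul_of_nonneg_left h (by linarith)
  rw [h2] at h3
  simp [gfn]; linarith


noncomputable def Lf (x : ℝ) : ℝ := Real.log (x+1) - Real.log x - (1/(2*x) + 1/(2*(x+1)))

lemma Lf_hasDeriv {x : ℝ} (hx : 0 < x) :
    HasDerivAt Lf (1/(2*x^2*(x+1)^2)) x := by
  have h1 : HasDerivAt (fun x : ℝ => Real.log (x+1)) (1/(x+1)) x := by
    simpa using ((hasDerivAt_id x).add_const 1).log (by simp only [id_eq]; intro h; linarith)
  have h2 : HasDerivAt Real.log (1/x) x := by
    simpa using Real.hasDerivAt_log hx.ne'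
  have h3 : HasDerivAt (fun x : ℝ => 1/(2*x)) (-2/(2*x)^2) x := by
    simpa [Pi.inv_def] using ((hasDerivAt_id x).const_mul 2).inv (by positivity)
  have h4 : HasDerivAt (fun x : ℝ => 1/(2*(x+1))) (-2/(2*(x+1))^2) x := by
    simpa [Pi.inv_def] using (((hasDerivAt_id x).add_const 1).const_mul 2).inv (by positivity)
  have h5 := (h1.sub h2).sub (h3.add h4)
  refine h5.congr_deriv ?_
  field_simp
  ring

lemma Lf_tendsto : Tendsto Lf atTop (𝓝 0) := by
  have t1 : Tendsto (fun x : ℝ => Real.log (x+1) - Real.log x) atTop (𝓝 0) := by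
    have hbase : Tendsto (fun x : ℝ => 1 + 1/x) atTop (𝓝 1) := by
      simpa using tendsto_const_nhds.add tendsto_inv_atTop_zero (α := ℝ)
    have hlog : Tendsto (fun x : ℝ => Real.log (1 + 1/x)) atTop (𝓝 0) := by
      have := (Real.continuousAt_log (by norm_num : (1:ℝ) ≠ 0)).tendsto.comp hbase
      simpa [Function.comp_def] using this
    apply hlog.congr'
    filter_upwards [eventually_gt_atTop (0:ℝ)] with x hx
    rw [← Real.log_div (by linarith) hx.ne']
    congr 1
    field_simp
  have t2 : Tendsto (fun x : ℝ => 1/(2*x) + 1/(2*(x+1))) atTop (𝓝 0) := by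
    have a1 : Tendsto (fun x : ℝ => 1/(2*x)) atTop (𝓝 0) :=
      tendsto_const_nhds.div_atTop (tendsto_id.const_mul_atTop (by norm_num))
    have a2 : Tendsto (fun x : ℝ => 1/(2*(x+1))) atTop (𝓝 0) :=
      tendsto_const_nhds.div_atTop
        ((tendsto_atTop_add_const_right _ 1 tendsto_id).const_mul_atTop (by norm_num))
    simpa using a1.add a2
  have h := t1.sub t2
  rw [sub_zero] at h
  exact h.congr fun x => by unfold Lf; ring

lemma Lf_nonpos {x : ℝ} (hx : 0 < x) : Lf x ≤ 0 := by
  have hmono : StrictMonoOn Lf (Ioi 0) := by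
    apply strictMonoOn_of_deriv_pos (convex_Ioi 0)
    · intro y hy
      exact (Lf_hasDeriv hy).differentiableAt.continuousAt.continuousWithinAt
    · intro y hy
      rw [interior_Ioi, mem_Ioi] at hy
      rw [(Lf_hasDeriv hy).deriv]
      positivity
  apply ge_of_tendsto Lf_tendsto
  filter_upwards [eventually_gt_atTop x] with z hz
  exact (hmono hx (lt_trans hx hz) hz).le

lemma gfn_hasDeriv {x : ℝ} (hx : 0 < x) : HasDerivAt gfn (Lf x) x := by
  have h1 : HasDerivAt (fun x : ℝ => Real.log (x+1)) (1/(x+1)) x := by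
    simpa using ((hasDerivAt_id x).add_const 1).log (by simp only [id_eq]; intro h; linarith)
  have h2 : HasDerivAt Real.log (1/x) x := by
    simpa using Real.hasDerivAt_log hx.ne'
  have h3 : HasDerivAt (fun x : ℝ => x + 1/2) 1 x := (hasDerivAt_id x).add_const _
  have h4 := (h3.mul (h1.sub h2)).sub_const 1
  refine h4.congr_deriv ?_
  unfold Lf
  simp only [Pi.sub_apply]
  field_simp
  ring

lemma gfn_antitoneOn : AntitoneOn gfn (Ioi 0) := by
  apply antitoneOn_of_deriv_nonpos (convex_Ioi 0)
  · intro y hy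
    exact (gfn_hasDeriv hy).differentiableAt.continuousAt.continuousWithinAt
  · intro y hy
    rw [interior_Ioi] at hy
    exact (gfn_hasDeriv hy).differentiableAt.differentiableWithinAt
  · intro y hy
    rw [interior_Ioi] at hy
    rw [(gfn_hasDeriv hy).deriv]
    exact Lf_nonpos hy


lemma Gamma_prod {y : ℝ} (hy : 0 < y) (n : ℕ) :
    Real.Gamma (y + (n+1)) = Real.Gamma y * ∏ j ∈ Finset.range (n+1), (y + j) := by
  induction n with
  | zero =>
    simp only [Nat.cast_zero, zero_add, Finset.prod_range_one, Nat.cast_zero, add_zero]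
    rw [Real.Gamma_add_one hy.ne', mul_comm]
  | succ n ih =>
    have harg : y + (((n+1:ℕ):ℝ) + 1) = (y + ((n:ℝ)+1)) + 1 := by push_cast; ring
    rw [Finset.prod_range_succ, ← mul_assoc, ← ih, harg,
      Real.Gamma_add_one (by positivity)]
    push_cast
    ring

lemma key_id {x : ℝ} (hx : 0 < x) {n : ℕ} (hn : 1 ≤ n) :
    Fst (x + n) =
      (Real.log (Real.Gamma (x+1)) - Real.log (Real.GammaSeq (x+1) n))
      + Real.log (Stirling.stirlingSeq n) + (1/2)*Real.log 2 + x
      - (x + n + 1/2) * Real.log (1 + x/n) + (Real.log n - Real.log (x+n+1)) := by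
  have hn0 : (0:ℝ) < n := by exact_mod_cast hn
  have hGpos : 0 < Real.Gamma (x+1) := Real.Gamma_pos_of_pos (by linarith)
  have hGn : 0 < Real.Gamma (x + n + 1) := Real.Gamma_pos_of_pos (by positivity)
  have hfac : (0:ℝ) < (n.factorial : ℝ) := by exact_mod_cast n.factorial_pos
  have h_prod : ∏ j ∈ Finset.range (n+1), (x+1+j)
      = (x+n+1) * Real.Gamma (x+n+1) / Real.Gamma (x+1) := by
    have h := Gamma_prod (show (0:ℝ) < x+1 by linarith) n
    rw [show x+1+((n:ℝ)+1) = (x+(n:ℝ)+1)+1 by ring,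
      Real.Gamma_add_one (by positivity)] at h
    rw [eq_div_iff hGpos.ne']
    linear_combination -h
  have hprod_pos : 0 < ∏ j ∈ Finset.range (n+1), (x+1+j) :=
    Finset.prod_pos (fun j _ => by positivity)
  have hlogGS : Real.log (Real.GammaSeq (x+1) n)
      = (x+1)*Real.log n + Real.log (n.factorial : ℝ)
        - (Real.log (x+n+1) + Real.log (Real.Gamma (x+n+1)) - Real.log (Real.Gamma (x+1))) := by
    rw [Real.GammaSeq, Real.log_div (by positivity) hprod_pos.ne',
      Real.log_mul (by positivity) hfac.ne', Real.log_rpow hn0, h_prod,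
      Real.log_div (by positivity) hGpos.ne', Real.log_mul (by positivity) hGn.ne']
  have hlogS : Real.log (Stirling.stirlingSeq n)
      = Real.log (n.factorial : ℝ)
        - ((1/2)*(Real.log 2 + Real.log n) + n*(Real.log n - 1)) := by
    rw [Stirling.stirlingSeq, Real.log_div hfac.ne' (by positivity),
      Real.log_mul (by positivity) (by positivity), Real.log_pow,
      Real.log_div hn0.ne' (Real.exp_ne_zero 1), Real.log_exp,
      Real.log_sqrt (by positivity), Real.log_mul (by norm_num) hn0.ne']
    ring
  have hlog1x : Real.log (1 + x/n) = Real.log (x+n) - Real.log n := by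
    rw [show 1 + x/n = (x+n)/n by field_simp; ring, Real.log_div (by positivity) hn0.ne']
  rw [Fst, hlogGS, hlogS, hlog1x]
  ring


lemma log_one_add_div_tendsto (c : ℝ) (hc : 0 < c) :
    Tendsto (fun n : ℕ => Real.log (1 + c/n)) atTop (𝓝 0) := by
  have hbase : Tendsto (fun n : ℕ => 1 + c/(n:ℝ)) atTop (𝓝 1) := by
    have : Tendsto (fun n : ℕ => c/(n:ℝ)) atTop (𝓝 0) :=
      tendsto_const_nhds.div_atTop tendsto_natCast_atTop_atTop
    simpa using tendsto_const_nhds.add this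
  have := (Real.continuousAt_log (by norm_num : (1:ℝ) ≠ 0)).tendsto.comp hbase
  simpa [Function.comp_def] using this

lemma Fst_tendsto {x : ℝ} (hx : 0 < x) :
    Tendsto (fun n : ℕ => Fst (x + n)) atTop (𝓝 (Real.log (Real.sqrt (2*π)))) := by
  have hGpos : 0 < Real.Gamma (x+1) := Real.Gamma_pos_of_pos (by linarith)
  have c1 : Tendsto (fun n : ℕ => Real.log (Real.Gamma (x+1)) - Real.log (Real.GammaSeq (x+1) n))
      atTop (𝓝 0) := by
    have h : Tendsto (fun n : ℕ => Real.log (Real.GammaSeq (x+1) n)) atTop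
        (𝓝 (Real.log (Real.Gamma (x+1)))) :=
      (Real.continuousAt_log hGpos.ne').tendsto.comp (Real.GammaSeq_tendsto_Gamma (x+1))
    have h2 := (tendsto_const_nhds (x := Real.log (Real.Gamma (x+1))) (f := atTop (α := ℕ))).sub h
    simpa using h2
  have c2 : Tendsto (fun n : ℕ => Real.log (Stirling.stirlingSeq n)) atTop
      (𝓝 (Real.log (Real.sqrt π))) :=
    (Real.continuousAt_log (Real.sqrt_pos.2 pi_pos).ne').tendsto.comp
      Stirling.tendsto_stirlingSeq_sqrt_pi
  have c3 : Tendsto (fun n : ℕ => (x + n + 1/2) * Real.log (1 + x/n)) atTop (𝓝 x) := by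
    have ha : Tendsto (fun n : ℕ => (n:ℝ) * Real.log (1 + x/n)) atTop (𝓝 x) :=
      (tendsto_mul_log_one_add_div_atTop x).comp tendsto_natCast_atTop_atTop
    have hb : Tendsto (fun n : ℕ => (x + 1/2) * Real.log (1 + x/n)) atTop (𝓝 0) := by
      simpa using (log_one_add_div_tendsto x hx).const_mul (x+1/2)
    have := ha.add hb
    rw [add_zero] at this
    exact this.congr (fun n => by ring)
  have c4 : Tendsto (fun n : ℕ => Real.log n - Real.log (x+n+1)) atTop (𝓝 0) := by
    have h := log_one_add_div_tendsto (x+1) (by linarith)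
    have : ∀ᶠ n : ℕ in atTop, -Real.log (1 + (x+1)/n) = Real.log n - Real.log (x+n+1) := by
      filter_upwards [eventually_gt_atTop 0] with n hn
      have hn0 : (0:ℝ) < n := by exact_mod_cast hn
      rw [show 1 + (x+1)/(n:ℝ) = (x+n+1)/n by field_simp; ring,
        Real.log_div (by positivity) hn0.ne']
      ring
    have hneg := h.neg
    rw [neg_zero] at hneg
    exact hneg.congr' this
  have ch : Tendsto (fun _ : ℕ => (1/2)*Real.log 2) atTop (𝓝 ((1/2)*Real.log 2)) :=
    tendsto_const_nhds
  have cx : Tendsto (fun _ : ℕ => x) atTop (𝓝 x) := tendsto_const_nhds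
  have hcomb := ((((c1.add c2).add ch).add cx).sub c3).add c4
  have heq : (0 : ℝ) + Real.log (Real.sqrt π) + (1/2)*Real.log 2 + x - x + 0
      = Real.log (Real.sqrt (2*π)) := by
    rw [Real.log_sqrt pi_pos.le, Real.log_sqrt (by positivity),
      Real.log_mul (by norm_num) pi_ne_zero]
    ring
  rw [heq] at hcomb
  apply hcomb.congr'
  filter_upwards [eventually_ge_atTop 1] with n hn
  exact (key_id hx hn).symm



lemma Fst_ge {x : ℝ} (hx : 0 < x) : Real.log (Real.sqrt (2*π)) ≤ Fst x := by
  have hmono : ∀ n : ℕ, Fst (x + n) ≤ Fst x := by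
    intro n
    induction n with
    | zero => simp
    | succ n ih =>
      have h1 := Fst_step (x := x + n) (by positivity)
      have h2 := gfn_nonneg (x := x + n) (by positivity)
      push_cast
      rw [show x + ((n:ℝ)+1) = (x + (n:ℝ)) + 1 by ring]
      linarith
  exact le_of_tendsto (Fst_tendsto hx) (Eventually.of_forall hmono)

lemma Fst_le_one {x : ℝ} (hx : 1 ≤ x) : Fst x ≤ 1 := by
  have hx0 : 0 < x := lt_of_lt_of_le one_pos hx
  have key : ∀ n : ℕ, Fst x - Fst (x + n) ≤ Fst 1 - Fst (1 + n) := by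
    intro n
    induction n with
    | zero => simp
    | succ n ih =>
      have s1 := Fst_step (x := x + n) (by positivity)
      have s2 := Fst_step (x := 1 + (n:ℝ)) (by positivity)
      have hg : gfn (x + n) ≤ gfn (1 + n) :=
        gfn_antitoneOn (mem_Ioi.2 (by positivity)) (mem_Ioi.2 (by positivity)) (by linarith)
      push_cast
      rw [show x + ((n:ℝ)+1) = (x+(n:ℝ))+1 by ring,
        show (1:ℝ) + ((n:ℝ)+1) = (1+(n:ℝ))+1 by ring]
      linarith
  have l1 := Fst_tendsto hx0
  have l2 := Fst_tendsto (x := 1) one_pos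
  have hlim : Tendsto (fun n : ℕ => Fst 1 - Fst (1 + n) + Fst (x + n)) atTop (𝓝 (Fst 1)) := by
    have := ((tendsto_const_nhds (x := Fst 1) (f := atTop (α := ℕ))).sub l2).add l1
    simpa using this
  have hF1 : Fst 1 = 1 := by
    norm_num [Fst, Real.Gamma_two]
  have hb : ∀ n : ℕ, Fst x ≤ Fst 1 - Fst (1 + n) + Fst (x + n) := fun n => by linarith [key n]
  have := ge_of_tendsto hlim (Eventually.of_forall hb)
  linarith

lemma Gamma_le_stirling {x : ℝ} (hx : 1 ≤ x) :
    Real.Gamma (x+1) ≤ Real.exp 1 * x ^ (x+1/2) * Real.exp (-x) := by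
  have hx0 : 0 < x := lt_of_lt_of_le one_pos hx
  rw [Gamma_eq_exp_Fst hx0]
  have h := Real.exp_le_exp.2 (Fst_le_one hx)
  have hp : (0:ℝ) ≤ x ^ (x+1/2) := (Real.rpow_pos_of_pos hx0 _).le
  have := mul_le_mul_of_nonneg_right (mul_le_mul_of_nonneg_right h hp) (Real.exp_nonneg (-x))
  exact this

lemma stirling_le_Gamma {x : ℝ} (hx : 0 < x) :
    Real.sqrt (2*π) * x ^ (x+1/2) * Real.exp (-x) ≤ Real.Gamma (x+1) := by
  rw [Gamma_eq_exp_Fst hx]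
  have hs : Real.sqrt (2*π) = Real.exp (Real.log (Real.sqrt (2*π))) :=
    (Real.exp_log (by positivity)).symm
  have h := Real.exp_le_exp.2 (Fst_ge hx)
  have hp : (0:ℝ) ≤ x ^ (x+1/2) := (Real.rpow_pos_of_pos hx _).le
  calc Real.sqrt (2*π) * x ^ (x+1/2) * Real.exp (-x)
      = Real.exp (Real.log (Real.sqrt (2*π))) * x ^ (x+1/2) * Real.exp (-x) := by rw [← hs]
    _ ≤ Real.exp (Fst x) * x ^ (x+1/2) * Real.exp (-x) :=
        mul_le_mul_of_nonneg_right (mul_le_mul_of_nonneg_right h hp) (Real.exp_nonneg (-x))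






open Real Filter Set Topology in
theorem stmt_14 (d q s : ℕ) (hd : 1 ≤ d) (hq : 1 ≤ q) (hs : 1 ≤ s)
    (hqs : s + d ≤ q) (R : ℝ) (hR : 0 < R) (ε : ℝ) (hε : ε = (s : ℝ) / q) :
    R ^ (2 * s) * (Real.Gamma ((s : ℝ) + 1)) ^ 2 * Phi d q s
      ≤ Real.exp 1 ^ 2 * (Real.exp 1 / Real.sqrt (2 * Real.pi)) ^ d * (q : ℝ) *
          (((1 - ε) ^ (1 - ε) / (1 + ε) ^ (1 + ε)) * (ε * R * d) ^ (2 * ε)) ^ (q : ℕ) := by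
  have hd0 : (0:ℝ) < d := by exact_mod_cast hd
  have hq0 : (0:ℝ) < q := by exact_mod_cast hq
  have hs0 : (0:ℝ) < s := by exact_mod_cast hs
  have hs1 : (1:ℝ) ≤ s := by exact_mod_cast hs
  have hqs' : (s:ℝ) + d ≤ q := by exact_mod_cast hqs
  have hsq : (s:ℝ) < q := by linarith
  set a : ℝ := ((q:ℝ) - s) / d with haDef
  set b : ℝ := ((q:ℝ) + s) / d with hbDef
  have ha1 : 1 ≤ a := by rw [haDef, le_div_iff₀ hd0]; linarith
  have hb1 : 1 ≤ b := by rw [hbDef, le_div_iff₀ hd0]; linarith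
  have ha0 : 0 < a := by linarith
  have hb0 : 0 < b := by linarith
  have hab : a ≤ b := by rw [haDef, hbDef]; gcongr <;> linarith
  have hsqrt : 0 < Real.sqrt (2*π) := Real.sqrt_pos.2 (by positivity)
  -- upper/lower stirling quantities
  set UpS : ℝ := Real.exp 1 * (s:ℝ) ^ ((s:ℝ)+1/2) * Real.exp (-(s:ℝ)) with hUpS
  set UpA : ℝ := Real.exp 1 * a ^ (a+1/2) * Real.exp (-a) with hUpA
  set LoB : ℝ := Real.sqrt (2*π) * b ^ (b+1/2) * Real.exp (-b) with hLoB
  have hUpS0 : 0 < UpS := by rw [hUpS]; positivity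
  have hUpA0 : 0 < UpA := by rw [hUpA]; positivity
  have hLoB0 : 0 < LoB := by rw [hLoB]; positivity
  have hGa : Real.Gamma (a+1) ≤ UpA := Gamma_le_stirling ha1
  have hGb : LoB ≤ Real.Gamma (b+1) := stirling_le_Gamma hb0
  have hGs : Real.Gamma ((s:ℝ)+1) ≤ UpS := Gamma_le_stirling hs1
  have hGa0 : 0 < Real.Gamma (a+1) := Real.Gamma_pos_of_pos (by linarith)
  have hGb0 : 0 < Real.Gamma (b+1) := Real.Gamma_pos_of_pos (by linarith)
  have hGs0 : 0 < Real.Gamma ((s:ℝ)+1) := Real.Gamma_pos_of_pos (by linarith)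
  -- step 1 : bound LHS by X
  set X : ℝ := R ^ (2*s) * UpS ^ 2 * (UpA ^ d / LoB ^ d) with hX
  have hPhi : Phi d q s = Real.Gamma (a+1) ^ d / Real.Gamma (b+1) ^ d := by
    rw [Phi, div_pow]
  have hstep1 : R ^ (2*s) * (Real.Gamma ((s:ℝ)+1)) ^ 2 * Phi d q s ≤ X := by
    rw [hPhi, hX]
    have h1 : Real.Gamma (a+1) ^ d / Real.Gamma (b+1) ^ d ≤ UpA ^ d / LoB ^ d := by
      apply div_le_div₀ (by positivity) (pow_le_pow_left₀ hGa0.le hGa d) (by positivity)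
        (pow_le_pow_left₀ hLoB0.le hGb d)
    have h2 : (Real.Gamma ((s:ℝ)+1)) ^ 2 ≤ UpS ^ 2 := pow_le_pow_left₀ hGs0.le hGs 2
    have hRp : (0:ℝ) < R ^ (2*s) := by positivity
    calc R ^ (2*s) * (Real.Gamma ((s:ℝ)+1)) ^ 2 * (Real.Gamma (a+1) ^ d / Real.Gamma (b+1) ^ d)
        ≤ R ^ (2*s) * UpS ^ 2 * (Real.Gamma (a+1) ^ d / Real.Gamma (b+1) ^ d) := by
          gcongr
      _ ≤ R ^ (2*s) * UpS ^ 2 * (UpA ^ d / LoB ^ d) := by gcongr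
  refine le_trans hstep1 ?_
  -- now compare X with RHS via logs
  have he0 : 0 < ε := by rw [hε]; positivity
  have he1 : ε < 1 := by rw [hε, div_lt_one hq0]; exact hsq
  have h1e : 0 < 1 - ε := by linarith
  have h2e : 0 < 1 + ε := by linarith
  have herd : 0 < ε * R * d := by positivity
  set Br : ℝ := (1 - ε) ^ (1 - ε) / (1 + ε) ^ (1 + ε) * (ε * R * d) ^ (2 * ε) with hBr
  have hBr0 : 0 < Br := by
    rw [hBr]
    have := Real.rpow_pos_of_pos h1e (1-ε)
    have := Real.rpow_pos_of_pos h2e (1+ε)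
    have := Real.rpow_pos_of_pos herd (2*ε)
    positivity
  set Y : ℝ := Real.exp 1 ^ 2 * (Real.exp 1 / Real.sqrt (2 * π)) ^ d * (q : ℝ) * Br ^ (q:ℕ)
    with hY
  have hX0 : 0 < X := by rw [hX]; positivity
  have hY0 : 0 < Y := by rw [hY]; positivity
  show X ≤ Y
  rw [← Real.log_le_log_iff hX0 hY0]
  -- expand log X
  have lUpS : Real.log UpS = 1 + ((s:ℝ)+1/2)*Real.log s - s := by
    rw [hUpS, Real.log_mul (by positivity) (Real.exp_ne_zero _),
      Real.log_mul (Real.exp_ne_zero _) (Real.rpow_pos_of_pos hs0 _).ne',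
      Real.log_exp, Real.log_exp, Real.log_rpow hs0]
    ring
  have lUpA : Real.log UpA = 1 + (a+1/2)*Real.log a - a := by
    rw [hUpA, Real.log_mul (by positivity) (Real.exp_ne_zero _),
      Real.log_mul (Real.exp_ne_zero _) (Real.rpow_pos_of_pos ha0 _).ne',
      Real.log_exp, Real.log_exp, Real.log_rpow ha0]
    ring
  have lLoB : Real.log LoB = Real.log (Real.sqrt (2*π)) + (b+1/2)*Real.log b - b := by
    rw [hLoB, Real.log_mul (by positivity) (Real.exp_ne_zero _),
      Real.log_mul hsqrt.ne' (Real.rpow_pos_of_pos hb0 _).ne',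
      Real.log_exp, Real.log_rpow hb0]
    ring
  have lX : Real.log X = 2*(s:ℝ)*Real.log R + 2*Real.log UpS
      + ((d:ℝ)*Real.log UpA - (d:ℝ)*Real.log LoB) := by
    rw [hX, Real.log_mul (by positivity) (by positivity),
      Real.log_mul (by positivity) (by positivity),
      Real.log_div (by positivity) (by positivity),
      Real.log_pow, Real.log_pow, Real.log_pow, Real.log_pow]
    push_cast
    ring
  have lBr : Real.log Br = (1-ε)*Real.log (1-ε) - (1+ε)*Real.log (1+ε)
      + 2*ε*Real.log (ε*R*d) := by
    rw [hBr, Real.log_mul (by positivity) (Real.rpow_pos_of_pos herd _).ne',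
      Real.log_div (Real.rpow_pos_of_pos h1e _).ne' (Real.rpow_pos_of_pos h2e _).ne',
      Real.log_rpow h1e, Real.log_rpow h2e, Real.log_rpow herd]
  have lY : Real.log Y = 2*1 + (d:ℝ)*(1 - Real.log (Real.sqrt (2*π))) + Real.log q
      + (q:ℝ)*Real.log Br := by
    rw [hY, Real.log_mul (by positivity) (by positivity),
      Real.log_mul (by positivity) hq0.ne',
      Real.log_mul (by positivity) (by positivity),
      Real.log_pow, Real.log_pow, Real.log_pow,
      Real.log_div (Real.exp_ne_zero _) hsqrt.ne', Real.log_exp]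
    push_cast
    ring
  -- atomic substitutions
  have sla : Real.log a = Real.log ((q:ℝ)-s) - Real.log d := by
    rw [haDef, Real.log_div (by linarith) hd0.ne']
  have slb : Real.log b = Real.log ((q:ℝ)+s) - Real.log d := by
    rw [hbDef, Real.log_div (by linarith) hd0.ne']
  have sl1e : Real.log (1-ε) = Real.log ((q:ℝ)-s) - Real.log q := by
    rw [hε, show 1 - (s:ℝ)/q = ((q:ℝ)-s)/q by field_simp, Real.log_div (by linarith) hq0.ne']
  have sl2e : Real.log (1+ε) = Real.log ((q:ℝ)+s) - Real.log q := by
    rw [hε, show 1 + (s:ℝ)/q = ((q:ℝ)+s)/q by field_simp, Real.log_div (by linarith) hq0.ne']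
  have slerd : Real.log (ε*R*d) = Real.log s + Real.log R + Real.log d - Real.log q := by
    rw [hε, show (s:ℝ)/q*R*(d:ℝ) = (s:ℝ)*R*d/q by ring,
      Real.log_div (by positivity) hq0.ne',
      Real.log_mul (by positivity) hd0.ne', Real.log_mul hs0.ne' hR.ne']
  have hfinal : Real.log Y - Real.log X
      = (Real.log q - Real.log s) + ((d:ℝ)/2)*(Real.log ((q:ℝ)+s) - Real.log ((q:ℝ)-s)) := by
    rw [lX, lY, lBr, lUpS, lUpA, lLoB, sla, slb, sl1e, sl2e, slerd, hε, haDef, hbDef]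
    field_simp
    ring
  have hlogsq : Real.log s ≤ Real.log q := (Real.log_lt_log hs0 hsq).le
  have hlogmM : Real.log ((q:ℝ)-s) ≤ Real.log ((q:ℝ)+s) := by
    apply (Real.log_le_log_iff (by linarith) (by linarith)).2
    linarith
  have hnn : 0 ≤ ((d:ℝ)/2)*(Real.log ((q:ℝ)+s) - Real.log ((q:ℝ)-s)) :=
    mul_nonneg (by positivity) (by linarith)
  linarith

end
end
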